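/- arXiv:2308.12614 — 10 statements merged into one kernel-verified Lean document; each statement's English description precedes it below -/
import Mathlib

section
/- A bipartite graph B is an interval bigraph if and only if its biadjacency matrix is zero-partitionable, i.e., rows and columns can be permuted so that every 0 entry can be colored R or C such that every R has only R-colored 0s to its right and every C has only C-colored 0s below it. -/
/-- `B` is an interval bigraph: each vertex gets a closed real interval, and
`x y` is an edge iff the intervals intersect. -/
def IsIntervalBigraph {n m : ℕ} (E : Fin n → Fin m → Prop) : Prop :=
  ∃ lx rx : Fin n → ℝ, ∃ ly ry : Fin m → ℝ,
    (∀ x, lx x ≤ rx x) ∧ (∀ y, ly y ≤ ry y) ∧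
    ∀ x y, E x y ↔ (lx x ≤ ry y ∧ ly y ≤ rx x)

/-- The biadjacency matrix is zero-partitionable: rows and columns can be permuted
and every 0 colored `R` (`true`) or `C` (`false`) so that every `R` has only
`R`-colored 0s to its right and every `C` has only `C`-colored 0s below it. -/
def ZeroPartitionable {n m : ℕ} (E : Fin n → Fin m → Prop) : Prop :=
  ∃ σ : Equiv.Perm (Fin n), ∃ τ : Equiv.Perm (Fin m), ∃ c : Fin n → Fin m → Bool,
    ∀ i j, ¬ E (σ i) (τ j) →
      (c i j = true → ∀ j', j < j' → ¬ E (σ i) (τ j') ∧ c i j' = true) ∧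
      (c i j = false → ∀ i', i < i' → ¬ E (σ i') (τ j) ∧ c i' j = false)

lemma aux_back {n m : ℕ} (E : Fin n → Fin m → Prop) (c : Fin n → Fin m → Bool)
    (H : ∀ i j, ¬ E i j →
      (c i j = true → ∀ j', j < j' → ¬ E i j' ∧ c i j' = true) ∧
      (c i j = false → ∀ i', i < i' → ¬ E i' j ∧ c i' j = false)) :
    IsIntervalBigraph E := by
  classical
  set R : Fin n → Fin m → Prop := fun i j => ¬ E i j ∧ c i j = true with hRdef
  set C : Fin n → Fin m → Prop := fun i j => ¬ E i j ∧ c i j = false with hCdef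
  have h_upR : ∀ i j j', R i j → j < j' → R i j' := fun i j j' h hlt =>
    (H i j h.1).1 h.2 j' hlt
  have h_upC : ∀ i j i', C i j → i < i' → C i' j := fun i j i' h hlt =>
    (H i j h.1).2 h.2 i' hlt
  set f : Fin n → ℕ := fun i => sInf {v | v = m ∨ ∃ j : Fin m, R i j ∧ (j : ℕ) = v} with hfdef
  set g : Fin m → ℕ := fun j => sInf {v | v = n ∨ ∃ i : Fin n, C i j ∧ (i : ℕ) = v} with hgdef
  have hfleR : ∀ i j, R i j → f i ≤ (j : ℕ) := fun i j h =>
    Nat.sInf_le (Or.inr ⟨j, h, rfl⟩)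
  have hgleC : ∀ i j, C i j → g j ≤ (i : ℕ) := fun i j h =>
    Nat.sInf_le (Or.inr ⟨i, h, rfl⟩)
  have hf_mem : ∀ i, f i = m ∨ ∃ j : Fin m, R i j ∧ (j : ℕ) = f i := fun i =>
    Nat.sInf_mem (⟨m, Or.inl rfl⟩ :
      {v | v = m ∨ ∃ j : Fin m, R i j ∧ (j : ℕ) = v}.Nonempty)
  have hg_mem : ∀ j, g j = n ∨ ∃ i : Fin n, C i j ∧ (i : ℕ) = g j := fun j =>
    Nat.sInf_mem (⟨n, Or.inl rfl⟩ :
      {v | v = n ∨ ∃ i : Fin n, C i j ∧ (i : ℕ) = v}.Nonempty)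
  have hRof : ∀ (i : Fin n) (j : Fin m), f i ≤ (j : ℕ) → R i j := by
    intro i j hle
    rcases hf_mem i with h | ⟨j0, hR0, hj0⟩
    · exfalso; have := j.isLt; omega
    · rcases eq_or_lt_of_le (le_trans (le_of_eq hj0) hle) with he | hlt
      · rwa [show j = j0 from Fin.ext he.symm]
      · exact h_upR i j0 j hR0 (by exact_mod_cast hlt)
  have hCof : ∀ (i : Fin n) (j : Fin m), g j ≤ (i : ℕ) → C i j := by
    intro i j hle
    rcases hg_mem j with h | ⟨i0, hC0, hi0⟩
    · exfalso; have := i.isLt; omega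
    · rcases eq_or_lt_of_le (le_trans (le_of_eq hi0) hle) with he | hlt
      · rwa [show i = i0 from Fin.ext he.symm]
      · exact h_upC i0 j i hC0 (by exact_mod_cast hlt)
  have hEiff : ∀ i j, E i j ↔ ((j : ℕ) < f i ∧ (i : ℕ) < g j) := by
    intro i j
    constructor
    · intro hE
      constructor
      · by_contra h
        exact (hRof i j (Nat.le_of_not_lt h)).1 hE
      · by_contra h
        exact (hCof i j (Nat.le_of_not_lt h)).1 hE
    · rintro ⟨h1, h2⟩
      by_contra hne
      cases hc : c i j with
      | true => exact Nat.lt_irrefl _ (Nat.lt_of_lt_of_le h1 (hfleR i j ⟨hne, hc⟩))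
      | false => exact Nat.lt_irrefl _ (Nat.lt_of_lt_of_le h2 (hgleC i j ⟨hne, hc⟩))
  have hstar : ∀ (i : Fin n) (j : Fin m), f i ≤ (j : ℕ) → (i : ℕ) < g j := by
    intro i j hle
    have hR := hRof i j hle
    by_contra h
    have hC := hCof i j (Nat.le_of_not_lt h)
    have h1 : c i j = true := hR.2
    have h2 : c i j = false := hC.2
    rw [h1] at h2
    exact Bool.noConfusion h2
  clear_value R C f g
  -- running minimum of f over rows with index ≥ k (value m if none)
  set q : ℕ → ℕ := fun k => sInf {v | v = m ∨ ∃ i' : Fin n, k ≤ (i' : ℕ) ∧ f i' = v} with hqdef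
  have hq_mem : ∀ k, q k = m ∨ ∃ i' : Fin n, k ≤ (i' : ℕ) ∧ f i' = q k := fun k =>
    Nat.sInf_mem (⟨m, Or.inl rfl⟩ :
      {v | v = m ∨ ∃ i' : Fin n, k ≤ (i' : ℕ) ∧ f i' = v}.Nonempty)
  have hq_le_m : ∀ k, q k ≤ m := fun k => Nat.sInf_le (Or.inl rfl)
  have hq_le_f : ∀ (k : ℕ) (i' : Fin n), k ≤ (i' : ℕ) → q k ≤ f i' := fun k i' h =>
    Nat.sInf_le (Or.inr ⟨i', h, rfl⟩)
  have hq_mono : ∀ k k', k ≤ k' → q k ≤ q k' := by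
    intro k k' hk
    rcases hq_mem k' with h | ⟨i', hi', hfeq⟩
    · rw [h]; exact hq_le_m k
    · rw [← hfeq]; exact hq_le_f k i' (le_trans hk hi')
  have hq_big : ∀ (k : ℕ) (j : Fin m), (∀ i' : Fin n, k ≤ (i' : ℕ) → (j : ℕ) < f i') →
      (j : ℕ) < q k := by
    intro k j hall
    rcases hq_mem k with h | ⟨i', hi', hfeq⟩
    · rw [h]; exact j.isLt
    · rw [← hfeq]; exact hall i' hi'
  clear_value q
  -- real parameters
  set δ : ℝ := 1 / (4 * ((n : ℝ) + 2)) with hδdef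
  have hn2 : (0 : ℝ) < (n : ℝ) + 2 := by positivity
  have hδpos : 0 < δ := by rw [hδdef]; positivity
  have hδsmall : ∀ k : ℕ, k ≤ n → ((k : ℝ) + 1) * δ ≤ 1 / 4 := by
    intro k hk
    have h1 : ((k : ℝ) + 1) ≤ (n : ℝ) + 2 := by
      have : (k : ℝ) ≤ (n : ℝ) := Nat.cast_le.mpr hk
      linarith
    have h2 : ((n : ℝ) + 2) * δ = 1 / 4 := by
      rw [hδdef]; field_simp
    nlinarith [hδpos]
  clear_value δ
  set posr : ℕ → ℝ := fun k => 1 / 2 - (q k : ℝ) - ((k : ℝ) + 1) * δ with hposrdef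
  have posr_mono : ∀ k k', k ≤ k' → posr k' ≤ posr k := by
    intro k k' hk
    have h1 : (q k : ℝ) ≤ (q k' : ℝ) := Nat.cast_le.mpr (hq_mono k k' hk)
    have h2 : (k : ℝ) ≤ (k' : ℝ) := Nat.cast_le.mpr hk
    simp only [hposrdef]
    nlinarith [hδpos]
  have posr_gap : ∀ k k', k < k' → posr k' + δ ≤ posr k := by
    intro k k' hk
    have h1 : (q k : ℝ) ≤ (q k' : ℝ) := Nat.cast_le.mpr (hq_mono k k' (le_of_lt hk))
    have h2 : (k : ℝ) + 1 ≤ (k' : ℝ) := by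
      have : (k + 1 : ℕ) ≤ k' := hk
      exact_mod_cast Nat.cast_le.mpr this
    simp only [hposrdef]
    nlinarith [hδpos]
  clear_value posr
  refine ⟨fun i => 1 / 4 - (f i : ℝ), fun i => posr (i : ℕ),
    fun j => posr (g j) + δ / 2, fun j => -(j : ℝ), ?_, ?_, ?_⟩
  · -- lx ≤ rx
    intro i
    have h1 : (q (i : ℕ) : ℝ) ≤ (f i : ℝ) := Nat.cast_le.mpr (hq_le_f (i : ℕ) i le_rfl)
    have h2 : ((i : ℕ) + 1 : ℝ) * δ ≤ 1 / 4 := by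
      have := hδsmall (i : ℕ) (le_of_lt i.isLt)
      exact_mod_cast this
    simp only [hposrdef]
    linarith
  · -- ly ≤ ry
    intro j
    have hqg : (j : ℕ) < q (g j) := by
      apply hq_big
      intro i' hi'
      by_contra h
      have := hstar i' j (Nat.le_of_not_lt h)
      omega
    have h1 : (j : ℝ) + 1 ≤ (q (g j) : ℝ) := by exact_mod_cast hqg
    have h2 : (0 : ℝ) ≤ ((g j : ℝ) + 1) * δ := by positivity
    have h3 : δ ≤ 1 / 4 := by
      have := hδsmall 0 (Nat.zero_le n)
      push_cast at this
      linarith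
    simp only [hposrdef]
    linarith
  · -- the iff
    intro i j
    rw [hEiff i j]
    show _ ↔ (1 / 4 - (f i : ℝ) ≤ -((j : ℕ) : ℝ) ∧ posr (g j) + δ / 2 ≤ posr (i : ℕ))
    constructor
    · rintro ⟨h1, h2⟩
      constructor
      · have : ((j : ℕ) : ℝ) + 1 ≤ (f i : ℝ) := by exact_mod_cast h1
        linarith
      · have := posr_gap (i : ℕ) (g j) h2
        linarith
    · rintro ⟨h1, h2⟩
      by_contra hne
      rcases Nat.lt_or_ge (j : ℕ) (f i) with hj | hj
      · rcases Nat.lt_or_ge (i : ℕ) (g j) with hi | hi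
        · exact hne ⟨hj, hi⟩
        · have := posr_mono (g j) (i : ℕ) hi
          linarith
      · have : (f i : ℝ) ≤ ((j : ℕ) : ℝ) := by exact_mod_cast hj
        linarith

theorem interval_bigraph_iff_zero_partitionable {n m : ℕ} (E : Fin n → Fin m → Prop) :
    IsIntervalBigraph E ↔ ZeroPartitionable E := by
  constructor
  · rintro ⟨lx, rx, ly, ry, hx, hy, hE⟩
    classical
    set σ : Equiv.Perm (Fin n) := Tuple.sort (fun i => -rx i) with hσdef
    set τ : Equiv.Perm (Fin m) := Tuple.sort (fun j => -ry j) with hτdef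
    have hσmono : ∀ i i' : Fin n, i ≤ i' → rx (σ i') ≤ rx (σ i) := by
      intro i i' h
      have := Tuple.monotone_sort (fun i => -rx i) h
      simp only [Function.comp] at this
      linarith
    have hτmono : ∀ j j' : Fin m, j ≤ j' → ry (τ j') ≤ ry (τ j) := by
      intro j j' h
      have := Tuple.monotone_sort (fun j => -ry j) h
      simp only [Function.comp] at this
      linarith
    refine ⟨σ, τ, fun i j => decide (ry (τ j) < lx (σ i)), ?_⟩
    intro i j hne
    have hzero : ¬ (lx (σ i) ≤ ry (τ j) ∧ ly (τ j) ≤ rx (σ i)) := fun h => hne ((hE _ _).mpr h)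
    constructor
    · intro hc j' hlt
      have hlt1 : ry (τ j) < lx (σ i) := of_decide_eq_true hc
      have hle : ry (τ j') ≤ ry (τ j) := hτmono j j' (le_of_lt hlt)
      have hlt2 : ry (τ j') < lx (σ i) := lt_of_le_of_lt hle hlt1
      refine ⟨?_, decide_eq_true hlt2⟩
      rw [hE]
      rintro ⟨h1, _⟩
      linarith
    · intro hc i' hlt
      have hnlt : ¬ (ry (τ j) < lx (σ i)) := of_decide_eq_false hc
      have h1 : lx (σ i) ≤ ry (τ j) := le_of_not_gt hnlt
      have h2 : rx (σ i) < ly (τ j) := by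
        by_contra h
        exact hzero ⟨h1, le_of_not_gt h⟩
      have h3 : rx (σ i') ≤ rx (σ i) := hσmono i i' (le_of_lt hlt)
      constructor
      · rw [hE]
        rintro ⟨_, h4⟩
        linarith
      · apply decide_eq_false
        have : lx (σ i') ≤ ry (τ j) := le_trans (hx _) (le_trans (le_of_lt (lt_of_le_of_lt h3 h2)) (hy _))
        exact not_lt.mpr this
  · rintro ⟨σ, τ, c, H⟩
    have hib : IsIntervalBigraph (fun i j => E (σ i) (τ j)) := aux_back _ c H
    obtain ⟨lx, rx, ly, ry, hx, hy, hE⟩ := hib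
    refine ⟨fun x => lx (σ.symm x), fun x => rx (σ.symm x),
      fun y => ly (τ.symm y), fun y => ry (τ.symm y),
      fun x => hx _, fun y => hy _, ?_⟩
    intro x y
    have := hE (σ.symm x) (τ.symm y)
    simpa using this
end

section
/- A bipartite graph B is an interval bigraph if and only if B is the intersection of two Ferrers bigraphs whose union is the complete bipartite graph on the same vertex classes. -/
/-- A Ferrers bigraph: the neighborhoods of the vertices of `X` are linearly
ordered by inclusion. -/
def IsFerrers {n m : ℕ} (F : Fin n → Fin m → Prop) : Prop :=
  ∀ x₁ x₂ : Fin n, (∀ y, F x₁ y → F x₂ y) ∨ (∀ y, F x₂ y → F x₁ y)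

section Aux

variable {n m : ℕ}

/-- `lx x < lx x'` constraint edges. -/
def Bedge (F₁ : Fin n → Fin m → Prop) (v w : Fin n ⊕ Fin n) : Prop :=
  ∃ x x' y, v = Sum.inl x ∧ w = Sum.inl x' ∧ F₁ x y ∧ ¬ F₁ x' y

/-- `rx x' < rx x` constraint edges. -/
def Cedge (F₂ : Fin n → Fin m → Prop) (v w : Fin n ⊕ Fin n) : Prop :=
  ∃ x x' y, v = Sum.inr x' ∧ w = Sum.inr x ∧ F₂ x y ∧ ¬ F₂ x' y

/-- `rx x < lx x'` constraint edges. -/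
def Dedge (F₁ F₂ : Fin n → Fin m → Prop) (v w : Fin n ⊕ Fin n) : Prop :=
  ∃ x x' y, v = Sum.inr x ∧ w = Sum.inl x' ∧ ¬ F₂ x y ∧ ¬ F₁ x' y

/-- edges other than D-edges. -/
def StepND (F₁ F₂ : Fin n → Fin m → Prop) (v w : Fin n ⊕ Fin n) : Prop :=
  (∃ x, v = Sum.inl x ∧ w = Sum.inr x) ∨ Bedge F₁ v w ∨ Cedge F₂ v w

def Stp (F₁ F₂ : Fin n → Fin m → Prop) (v w : Fin n ⊕ Fin n) : Prop :=
  StepND F₁ F₂ v w ∨ Dedge F₁ F₂ v w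

def Reach (F₁ F₂ : Fin n → Fin m → Prop) : Fin n ⊕ Fin n → Fin n ⊕ Fin n → Prop :=
  Relation.ReflTransGen (Stp F₁ F₂)

def RND (F₁ F₂ : Fin n → Fin m → Prop) : Fin n ⊕ Fin n → Fin n ⊕ Fin n → Prop :=
  Relation.ReflTransGen (StepND F₁ F₂)

/-- strict edges. -/
def SE (F₁ F₂ : Fin n → Fin m → Prop) (v w : Fin n ⊕ Fin n) : Prop :=
  Bedge F₁ v w ∨ Cedge F₂ v w ∨ Dedge F₁ F₂ v w

def good (F₁ F₂ : Fin n → Fin m → Prop) (y : Fin m) : Fin n ⊕ Fin n → Prop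
  | Sum.inl x => ¬ F₁ x y
  | Sum.inr x => F₂ x y

lemma ferrers_resolve {F : Fin n → Fin m → Prop} (hF : IsFerrers F) {x x' : Fin n} {y : Fin m}
    (h1 : F x y) (h2 : ¬ F x' y) : ∀ y', F x' y' → F x y' := by
  rcases hF x x' with h | h
  · exact absurd (h y h1) h2
  · exact h

variable {F₁ F₂ : Fin n → Fin m → Prop}

lemma rnd_reach {a b : Fin n ⊕ Fin n} (h : RND F₁ F₂ a b) : Reach F₁ F₂ a b :=
  Relation.ReflTransGen.mono (fun _ _ h => Or.inl h) a b h

lemma se_stp {a b : Fin n ⊕ Fin n} (h : SE F₁ F₂ a b) : Stp F₁ F₂ a b := by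
  rcases h with h | h | h
  · exact Or.inl (Or.inr (Or.inl h))
  · exact Or.inl (Or.inr (Or.inr h))
  · exact Or.inr h

lemma good_step (hF₁ : IsFerrers F₁) (hF₂ : IsFerrers F₂)
    (hU : ∀ x y, F₁ x y ∨ F₂ x y) {y : Fin m} {v w : Fin n ⊕ Fin n}
    (h : StepND F₁ F₂ v w) (hg : good F₁ F₂ y v) : good F₁ F₂ y w := by
  rcases h with ⟨x, rfl, rfl⟩ | ⟨x, x', y₀, rfl, rfl, h1, h2⟩ | ⟨x, x', y₀, rfl, rfl, h1, h2⟩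
  · exact (hU x y).resolve_left hg
  · intro hx'
    exact hg (ferrers_resolve hF₁ h1 h2 y hx')
  · exact ferrers_resolve hF₂ h1 h2 y hg

lemma good_rnd (hF₁ : IsFerrers F₁) (hF₂ : IsFerrers F₂)
    (hU : ∀ x y, F₁ x y ∨ F₂ x y) {y : Fin m} {v w : Fin n ⊕ Fin n}
    (h : RND F₁ F₂ v w) (hg : good F₁ F₂ y v) : good F₁ F₂ y w := by
  induction h with
  | refl => exact hg
  | tail _ hstep ih => exact good_step hF₁ hF₂ hU hstep ih

lemma reach_decomp {a b : Fin n ⊕ Fin n} (h : Reach F₁ F₂ a b) :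
    RND F₁ F₂ a b ∨ ∃ c d, Dedge F₁ F₂ c d ∧ RND F₁ F₂ a c ∧ Reach F₁ F₂ d b := by
  induction h using Relation.ReflTransGen.head_induction_on with
  | refl => exact Or.inl Relation.ReflTransGen.refl
  | head h' hrest ih =>
    rcases h' with hnd | hd
    · rcases ih with h1 | ⟨c, d, hde, hrnd, hr⟩
      · exact Or.inl (Relation.ReflTransGen.head hnd h1)
      · exact Or.inr ⟨c, d, hde, Relation.ReflTransGen.head hnd hrnd, hr⟩
    · exact Or.inr ⟨_, _, hd, Relation.ReflTransGen.refl, hrest⟩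

noncomputable def muSet (F₂ : Fin n → Fin m → Prop) (u : Fin n) : Finset (Fin m) :=
  @Finset.filter _ (fun y => ¬ F₂ u y) (Classical.decPred _) Finset.univ

noncomputable def mu (F₂ : Fin n → Fin m → Prop) (u : Fin n) : ℕ := (muSet F₂ u).card

lemma mem_muSet {u : Fin n} {y : Fin m} : y ∈ muSet F₂ u ↔ ¬ F₂ u y := by
  classical
  simp [muSet]

lemma noBadAux (hF₁ : IsFerrers F₁) (hF₂ : IsFerrers F₂)
    (hU : ∀ x y, F₁ x y ∨ F₂ x y) :
    ∀ k : ℕ, ∀ u v' y, mu F₂ u ≤ k → ¬ F₂ u y → ¬ F₁ v' y →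
      Reach F₁ F₂ (Sum.inl v') (Sum.inr u) → False := by
  intro k
  induction k with
  | zero =>
    intro u v' y hk h2 _ _
    have : 0 < mu F₂ u := Finset.card_pos.mpr ⟨y, mem_muSet.2 h2⟩
    omega
  | succ k ih =>
    intro u v' y hk h2 h1 hreach
    rcases reach_decomp hreach with hrnd | ⟨c, d, hde, hrnd, hr⟩
    · exact h2 (good_rnd hF₁ hF₂ hU hrnd h1)
    · obtain ⟨u'', v'', y'', rfl, rfl, h2'', h1''⟩ := hde
      have hF2u'' : F₂ u'' y := good_rnd hF₁ hF₂ hU hrnd h1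
      have hsub : ∀ y', F₂ u y' → F₂ u'' y' := ferrers_resolve hF₂ hF2u'' h2
      have hlt : mu F₂ u'' < mu F₂ u := by
        apply Finset.card_lt_card
        rw [Finset.ssubset_iff_of_subset]
        · exact ⟨y, mem_muSet.2 h2, fun hy => (mem_muSet.1 hy) hF2u''⟩
        · intro y' hy'
          exact mem_muSet.2 (fun h => (mem_muSet.1 hy') (hsub y' h))
      have hreach'' : Reach F₁ F₂ (Sum.inl v'') (Sum.inr u'') := by
        refine Relation.ReflTransGen.trans hr ?_
        refine Relation.ReflTransGen.head ?_ (rnd_reach hrnd)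
        exact Or.inr ⟨u, v', y, rfl, rfl, h2, h1⟩
      exact ih u'' v'' y'' (by omega) h2'' h1'' hreach''

lemma noCycle (hF₁ : IsFerrers F₁) (hF₂ : IsFerrers F₂)
    (hU : ∀ x y, F₁ x y ∨ F₂ x y) {c d : Fin n ⊕ Fin n}
    (hse : SE F₁ F₂ c d) (hr : Reach F₁ F₂ d c) : False := by
  rcases reach_decomp hr with hrnd | ⟨c₀, d₀, hde, hrnd, hr₀⟩
  · rcases hse with ⟨x, x', y, rfl, rfl, h1, h2⟩ | ⟨x, x', y, rfl, rfl, h1, h2⟩ |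
      ⟨x, x', y, rfl, rfl, h2, h1⟩
    · exact (good_rnd hF₁ hF₂ hU hrnd h2) h1
    · exact h2 (good_rnd hF₁ hF₂ hU hrnd h1)
    · exact h2 (good_rnd hF₁ hF₂ hU hrnd h1)
  · obtain ⟨u, v, y, rfl, rfl, h2, h1⟩ := hde
    have hrch : Reach F₁ F₂ (Sum.inl v) (Sum.inr u) :=
      Relation.ReflTransGen.trans (Relation.ReflTransGen.tail hr₀ (se_stp hse)) (rnd_reach hrnd)
    exact noBadAux hF₁ hF₂ hU (mu F₂ u) u v y le_rfl h2 h1 hrch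

def Prec (F₁ F₂ : Fin n → Fin m → Prop) (u v : Fin n ⊕ Fin n) : Prop :=
  ∃ c d, Reach F₁ F₂ u c ∧ SE F₁ F₂ c d ∧ Reach F₁ F₂ d v

noncomputable def phiSet (F₁ F₂ : Fin n → Fin m → Prop) (v : Fin n ⊕ Fin n) :
    Finset (Fin n ⊕ Fin n) :=
  @Finset.filter _ (fun u => Prec F₁ F₂ u v) (Classical.decPred _) Finset.univ

noncomputable def phi (F₁ F₂ : Fin n → Fin m → Prop) (v : Fin n ⊕ Fin n) : ℕ :=
  (phiSet F₁ F₂ v).card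

lemma mem_phiSet {u v : Fin n ⊕ Fin n} : u ∈ phiSet F₁ F₂ v ↔ Prec F₁ F₂ u v := by
  classical
  simp [phiSet]

lemma prec_step {u v w : Fin n ⊕ Fin n} (h : Prec F₁ F₂ u v) (hs : Stp F₁ F₂ v w) :
    Prec F₁ F₂ u w := by
  obtain ⟨c, d, hc, hse, hd⟩ := h
  exact ⟨c, d, hc, hse, Relation.ReflTransGen.tail hd hs⟩

lemma phi_le_A (x : Fin n) : phi F₁ F₂ (Sum.inl x) ≤ phi F₁ F₂ (Sum.inr x) := by
  apply Finset.card_le_card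
  intro u hu
  exact mem_phiSet.2 (prec_step (mem_phiSet.1 hu) (Or.inl (Or.inl ⟨x, rfl, rfl⟩)))

lemma phi_lt (hF₁ : IsFerrers F₁) (hF₂ : IsFerrers F₂)
    (hU : ∀ x y, F₁ x y ∨ F₂ x y) {a b : Fin n ⊕ Fin n} (hse : SE F₁ F₂ a b) :
    phi F₁ F₂ a < phi F₁ F₂ b := by
  apply Finset.card_lt_card
  rw [Finset.ssubset_iff_of_subset]
  · refine ⟨a, mem_phiSet.2 ⟨a, b, Relation.ReflTransGen.refl, hse, Relation.ReflTransGen.refl⟩, ?_⟩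
    intro ha
    obtain ⟨c, d, h1, h2, h3⟩ := mem_phiSet.1 ha
    exact noCycle hF₁ hF₂ hU h2 (Relation.ReflTransGen.trans h3 h1)
  · intro u hu
    exact mem_phiSet.2 (prec_step (mem_phiSet.1 hu) (se_stp hse))

lemma phi_bound (v : Fin n ⊕ Fin n) : phi F₁ F₂ v ≤ n + n := by
  have h1 : phi F₁ F₂ v ≤ Fintype.card (Fin n ⊕ Fin n) := Finset.card_le_univ _
  simpa using h1

lemma backward (F₁ F₂ : Fin n → Fin m → Prop) (hF₁ : IsFerrers F₁) (hF₂ : IsFerrers F₂)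
    (hU : ∀ x y, F₁ x y ∨ F₂ x y) :
    IsIntervalBigraph (fun x y => F₁ x y ∧ F₂ x y) := by
  classical
  set lx : Fin n → ℝ := fun x => (phi F₁ F₂ (Sum.inl x) : ℝ) with hlx
  set rx : Fin n → ℝ := fun x => (phi F₁ F₂ (Sum.inr x) : ℝ) with hrx
  set S₁ : Fin m → Finset (Fin n) := fun y => Finset.univ.filter (fun x => ¬ F₁ x y) with hS₁
  set S₂ : Fin m → Finset (Fin n) := fun y => Finset.univ.filter (fun x => ¬ F₂ x y) with hS₂
  have memS₁ : ∀ {x y}, x ∈ S₁ y ↔ ¬ F₁ x y := by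
    intro x y; simp [hS₁]
  have memS₂ : ∀ {x y}, x ∈ S₂ y ↔ ¬ F₂ x y := by
    intro x y; simp [hS₂]
  set ry : Fin m → ℝ := fun y =>
    if h : (S₁ y).Nonempty then (S₁ y).inf' h lx - 1/2 else (n : ℝ) + n + 1 with hry
  set ly : Fin m → ℝ := fun y =>
    if h : (S₂ y).Nonempty then (S₂ y).sup' h rx + 1/2 else -1 with hly
  have fact_B : ∀ x x' y, F₁ x y → ¬ F₁ x' y → lx x + 1 ≤ lx x' := by
    intro x x' y h1 h2
    have := phi_lt hF₁ hF₂ hU (Or.inl ⟨x, x', y, rfl, rfl, h1, h2⟩)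
    simp only [hlx]
    exact_mod_cast Nat.succ_le_of_lt this
  have fact_C : ∀ x x' y, F₂ x y → ¬ F₂ x' y → rx x' + 1 ≤ rx x := by
    intro x x' y h1 h2
    have := phi_lt hF₁ hF₂ hU (Or.inr (Or.inl ⟨x, x', y, rfl, rfl, h1, h2⟩))
    simp only [hrx]
    exact_mod_cast Nat.succ_le_of_lt this
  have fact_D : ∀ x x' y, ¬ F₂ x y → ¬ F₁ x' y → rx x + 1 ≤ lx x' := by
    intro x x' y h2 h1
    have := phi_lt hF₁ hF₂ hU (Or.inr (Or.inr ⟨x, x', y, rfl, rfl, h2, h1⟩))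
    simp only [hlx, hrx]
    exact_mod_cast Nat.succ_le_of_lt this
  have fact_A : ∀ x, lx x ≤ rx x := by
    intro x
    simp only [hlx, hrx]
    exact_mod_cast phi_le_A x
  have lx_bound : ∀ x, lx x ≤ (n : ℝ) + n := by
    intro x
    simp only [hlx]
    exact_mod_cast phi_bound _
  have rx_bound : ∀ x, rx x ≤ (n : ℝ) + n := by
    intro x
    simp only [hrx]
    exact_mod_cast phi_bound _
  have lx_nonneg : ∀ x, 0 ≤ lx x := fun x => by simp [hlx]
  have rx_nonneg : ∀ x, 0 ≤ rx x := fun x => by simp [hrx]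
  have c1 : ∀ x y, F₁ x y ↔ lx x ≤ ry y := by
    intro x y
    by_cases h : (S₁ y).Nonempty
    · simp only [hry, dif_pos h]
      constructor
      · intro hxy
        have : lx x + 1 ≤ (S₁ y).inf' h lx :=
          Finset.le_inf' h lx (fun x' hx' => fact_B x x' y hxy (memS₁.1 hx'))
        linarith
      · intro hle
        by_contra hnot
        have : (S₁ y).inf' h lx ≤ lx x := Finset.inf'_le lx (memS₁.2 hnot)
        linarith
    · constructor
      · intro _
        simp only [hry, dif_neg h]
        linarith [lx_bound x]
      · intro _
        by_contra hnot
        exact h ⟨x, memS₁.2 hnot⟩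
  have c2 : ∀ x y, F₂ x y ↔ ly y ≤ rx x := by
    intro x y
    by_cases h : (S₂ y).Nonempty
    · simp only [hly, dif_pos h]
      constructor
      · intro hxy
        have : (S₂ y).sup' h rx ≤ rx x - 1 :=
          Finset.sup'_le h rx (fun x' hx' => by linarith [fact_C x x' y hxy (memS₂.1 hx')])
        linarith
      · intro hle
        by_contra hnot
        have : rx x ≤ (S₂ y).sup' h rx := Finset.le_sup' rx (memS₂.2 hnot)
        linarith
    · constructor
      · intro _
        simp only [hly, dif_neg h]
        linarith [rx_nonneg x]
      · intro _
        by_contra hnot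
        exact h ⟨x, memS₂.2 hnot⟩
  have c4 : ∀ y, ly y ≤ ry y := by
    intro y
    by_cases h2 : (S₂ y).Nonempty
    · by_cases h1 : (S₁ y).Nonempty
      · simp only [hly, hry, dif_pos h1, dif_pos h2]
        have key : (S₂ y).sup' h2 rx + 1 ≤ (S₁ y).inf' h1 lx := by
          apply Finset.le_inf' h1 lx
          intro x' hx'
          have : (S₂ y).sup' h2 rx ≤ lx x' - 1 := by
            apply Finset.sup'_le h2 rx
            intro x hx
            linarith [fact_D x x' y (memS₂.1 hx) (memS₁.1 hx')]
          linarith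
        linarith
      · simp only [hly, hry, dif_pos h2, dif_neg h1]
        have : (S₂ y).sup' h2 rx ≤ (n : ℝ) + n :=
          Finset.sup'_le h2 rx (fun x _ => rx_bound x)
        linarith
    · by_cases h1 : (S₁ y).Nonempty
      · simp only [hly, hry, dif_pos h1, dif_neg h2]
        have : (0 : ℝ) ≤ (S₁ y).inf' h1 lx :=
          Finset.le_inf' h1 lx (fun x _ => lx_nonneg x)
        linarith
      · simp only [hly, hry, dif_neg h1, dif_neg h2]
        have : (0 : ℝ) ≤ (n : ℝ) + n := by positivity
        linarith
  exact ⟨lx, rx, ly, ry, fact_A, c4, fun x y => and_congr (c1 x y) (c2 x y)⟩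

end Aux

theorem interval_bigraph_iff_intersection_of_two_ferrers {n m : ℕ}
    (E : Fin n → Fin m → Prop) :
    IsIntervalBigraph E ↔
      ∃ F₁ F₂ : Fin n → Fin m → Prop, IsFerrers F₁ ∧ IsFerrers F₂ ∧
        (∀ x y, E x y ↔ F₁ x y ∧ F₂ x y) ∧ (∀ x y, F₁ x y ∨ F₂ x y) := by
  constructor
  · rintro ⟨lx, rx, ly, ry, h1, h2, h3⟩
    refine ⟨fun x y => lx x ≤ ry y, fun x y => ly y ≤ rx x, ?_, ?_, h3, ?_⟩
    · intro x₁ x₂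
      rcases le_total (lx x₂) (lx x₁) with h | h
      · exact Or.inl (fun y hy => le_trans h hy)
      · exact Or.inr (fun y hy => le_trans h hy)
    · intro x₁ x₂
      rcases le_total (rx x₁) (rx x₂) with h | h
      · exact Or.inl (fun y hy => le_trans hy h)
      · exact Or.inr (fun y hy => le_trans hy h)
    · intro x y
      by_contra hc
      push_neg at hc
      obtain ⟨hA, hB⟩ := hc
      have := h1 x
      have := h2 y
      linarith
  · rintro ⟨F₁, F₂, hF₁, hF₂, hE, hU⟩
    obtain ⟨lx, rx, ly, ry, h1, h2, h3⟩ := backward F₁ F₂ hF₁ hF₂ hU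
    exact ⟨lx, rx, ly, ry, h1, h2, fun x y => (hE x y).trans (h3 x y)⟩
end

section
/- If a bipartite graph B = (X, Y, E) admits an ordering x_1,...,x_n of X and y_1,...,y_m of Y such that in the resulting biadjacency matrix no 0 entry has a 1 both below it and to its right, then assigning to x_i the pair (i, k_i) where k_i is the largest column index with entry 1 in row i (and symmetrically for columns) yields a signed-interval representation of B. -/
/-- The signed-interval adjacency condition for pairs `(lu, ru)` and `(lv, rv)`:
both intervals positive and intersecting, or the negative interval of one contained
in the positive interval of the other. -/
def SIAdj (lu ru lv rv : ℝ) : Prop :=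
  (lu ≤ ru ∧ lv ≤ rv ∧ lu ≤ rv ∧ lv ≤ ru) ∨
  (ru < lu ∧ lv ≤ rv ∧ lv ≤ ru ∧ lu ≤ rv) ∨
  (rv < lv ∧ lu ≤ ru ∧ lu ≤ rv ∧ lv ≤ ru)

/-- If the biadjacency matrix (in the given orderings of `X` and `Y`) has no 0 entry
with a 1 both below it and to its right, then assigning to the `i`-th row vertex the
pair `(i, k i)` where `k i` is the largest column index carrying a 1 in row `i`
(and symmetrically, to the `j`-th column vertex the pair `(j, c j)`) yields a
signed-interval representation of `B`. -/
theorem stair_free_gives_signed_interval_representation {n m : ℕ}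
    (E : Fin n → Fin m → Prop)
    (h : ∀ i j, ¬ E i j →
      (∀ j', j < j' → ¬ E i j') ∨ (∀ i', i < i' → ¬ E i' j))
    (k : Fin n → Fin m) (hk : ∀ i, E i (k i) ∧ ∀ j, E i j → j ≤ k i)
    (c : Fin m → Fin n) (hc : ∀ j, E (c j) j ∧ ∀ i, E i j → i ≤ c j) :
    ∀ i j, E i j ↔
      SIAdj ((i : ℕ) : ℝ) ((k i : ℕ) : ℝ) ((j : ℕ) : ℝ) ((c j : ℕ) : ℝ) := by
  intro i j
  constructor
  · intro hE
    have h1 : (j : ℕ) ≤ (k i : ℕ) := (hk i).2 j hE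
    have h2 : (i : ℕ) ≤ (c j : ℕ) := (hc j).2 i hE
    unfold SIAdj
    rcases le_or_gt (i : ℕ) ((k i : ℕ)) with hik | hik
    · rcases le_or_gt (j : ℕ) ((c j : ℕ)) with hjc | hjc
      · exact Or.inl ⟨by exact_mod_cast hik, by exact_mod_cast hjc,
          by exact_mod_cast h2, by exact_mod_cast h1⟩
      · exact Or.inr (Or.inr ⟨by exact_mod_cast hjc, by exact_mod_cast hik,
          by exact_mod_cast h2, by exact_mod_cast h1⟩)
    · rcases le_or_gt (j : ℕ) ((c j : ℕ)) with hjc | hjc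
      · exact Or.inr (Or.inl ⟨by exact_mod_cast hik, by exact_mod_cast hjc,
          by exact_mod_cast h1, by exact_mod_cast h2⟩)
      · omega
  · intro hS
    have h1 : (j : ℕ) ≤ (k i : ℕ) ∧ (i : ℕ) ≤ (c j : ℕ) := by
      rcases hS with ⟨_, _, a, b⟩ | ⟨_, _, a, b⟩ | ⟨_, _, a, b⟩
      · exact ⟨by exact_mod_cast b, by exact_mod_cast a⟩
      · exact ⟨by exact_mod_cast a, by exact_mod_cast b⟩
      · exact ⟨by exact_mod_cast b, by exact_mod_cast a⟩
    by_contra hE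
    rcases h i j hE with hrow | hcol
    · have hle : (k i : ℕ) ≤ (j : ℕ) := by
        by_contra hlt
        exact hrow (k i) (by omega) (hk i).1
      have : j = k i := Fin.ext (by omega)
      exact hE (this ▸ (hk i).1)
    · have hle : (c j : ℕ) ≤ (i : ℕ) := by
        by_contra hlt
        exact hcol (c j) (by omega) (hc j).1
      have : i = c j := Fin.ext (by omega)
      exact hE (this ▸ (hc j).1)
end

section
/- A finite simple graph G (with loops allowed, where a vertex with an assigned positive interval has a loop) is a signed-interval graph if and only if its adjacency matrix, with diagonal entries recording which vertices get positive intervals, is of Ferrers dimension at most 2, i.e., the vertices can be simultaneously ordered (same order for rows and columns) so that no 0 entry has a 1 both below it and to its right. -/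
/-- Signed-interval adjacency for a graph: vertices `u, v` (possibly equal) are
adjacent iff their positive intervals intersect, or the negative interval of one is
contained in the positive interval of the other.  Note `SIGAdj l r v v` holds iff
`v` carries a positive interval, so loops record positivity. -/
def SIGAdj {V : Type*} (l r : V → ℝ) (u v : V) : Prop :=
  (l u ≤ r u ∧ l v ≤ r v ∧ l u ≤ r v ∧ l v ≤ r u) ∨
  (r u < l u ∧ l v ≤ r v ∧ l v ≤ r u ∧ l u ≤ r v) ∨
  (r v < l v ∧ l u ≤ r u ∧ l u ≤ r v ∧ l v ≤ r u)

lemma sigadj_iff {V : Type*} (l r : V → ℝ) (u v : V) :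
    SIGAdj l r u v ↔ l u ≤ r v ∧ l v ≤ r u ∧ (l u ≤ r u ∨ l v ≤ r v) := by
  unfold SIGAdj
  constructor
  · rintro (⟨h1, h2, h3, h4⟩ | ⟨h1, h2, h3, h4⟩ | ⟨h1, h2, h3, h4⟩)
    · exact ⟨h3, h4, Or.inl h1⟩
    · exact ⟨h4, h3, Or.inr h2⟩
    · exact ⟨h3, h4, Or.inl h2⟩
  · rintro ⟨h1, h2, hp⟩
    by_cases hu : l u ≤ r u <;> by_cases hv : l v ≤ r v
    · exact Or.inl ⟨hu, hv, h1, h2⟩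
    · exact Or.inr (Or.inr ⟨not_le.1 hv, hu, h1, h2⟩)
    · exact Or.inr (Or.inl ⟨not_le.1 hu, hv, h2, h1⟩)
    · rcases hp with h | h <;> [exact absurd h hu; exact absurd h hv]

/-- A finite graph (loops allowed, a loop at `v` meaning `v` gets a positive
interval) is a signed-interval graph iff its adjacency matrix is of Ferrers
dimension at most 2 in the symmetric sense: the vertices can be simultaneously
ordered (same order for rows and columns) so that no 0 entry has a 1 both below it
and to its right. -/
theorem signed_interval_graph_iff_symmetric_stair_free {n : ℕ}
    (A : Fin n → Fin n → Prop) (hsym : ∀ u v, A u v → A v u) :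
    (∃ l r : Fin n → ℝ, ∀ u v, A u v ↔ SIGAdj l r u v) ↔
    (∃ σ : Equiv.Perm (Fin n), ∀ i j, ¬ A (σ i) (σ j) →
      (∀ j', j < j' → ¬ A (σ i) (σ j')) ∨ (∀ i', i < i' → ¬ A (σ i') (σ j))) := by
  classical
  constructor
  · rintro ⟨l, r, h⟩
    refine ⟨Tuple.sort l, fun i j hA => ?_⟩
    have hmono : ∀ a b : Fin n, a ≤ b → l (Tuple.sort l a) ≤ l (Tuple.sort l b) :=
      fun a b hab => Tuple.monotone_sort l hab
    set σ := Tuple.sort l with hσ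
    rw [h, sigadj_iff] at hA
    push_neg at hA
    by_cases h1 : l (σ i) ≤ r (σ j)
    · by_cases h2 : l (σ j) ≤ r (σ i)
      · -- both negative
        obtain ⟨hpu, hpv⟩ := hA h1 h2
        by_cases hfirst : ∀ j', j < j' → ¬ A (σ i) (σ j')
        · exact Or.inl hfirst
        · push_neg at hfirst
          obtain ⟨j₀, hj₀, hAw⟩ := hfirst
          rw [h, sigadj_iff] at hAw
          obtain ⟨hw1, hw2, hwp⟩ := hAw
          have hwpos : l (σ j₀) ≤ r (σ j₀) := by
            rcases hwp with hh | hh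
            · linarith
            · exact hh
          have hlw : l (σ j) ≤ l (σ j₀) := hmono _ _ (le_of_lt hj₀)
          refine Or.inr fun i' hi' hAw' => ?_
          rw [h, sigadj_iff] at hAw'
          obtain ⟨hw1', hw2', hwp'⟩ := hAw'
          have hwpos' : l (σ i') ≤ r (σ i') := by
            rcases hwp' with hh | hh
            · exact hh
            · linarith
          have hli' : l (σ i) ≤ l (σ i') := hmono _ _ (le_of_lt hi')
          linarith
      · -- r (σ i) < l (σ j) : everything to the right of j is non-adjacent to row i
        refine Or.inl fun j' hj' hA' => ?_
        rw [h, sigadj_iff] at hA'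
        have : l (σ j) ≤ l (σ j') := hmono _ _ (le_of_lt hj')
        exact h2 (le_trans this hA'.2.1)
    · -- r (σ j) < l (σ i) : everything below i is non-adjacent to column j
      refine Or.inr fun i' hi' hA' => ?_
      rw [h, sigadj_iff] at hA'
      have : l (σ i) ≤ l (σ i') := hmono _ _ (le_of_lt hi')
      exact h1 (le_trans this hA'.1)
  · rintro ⟨σ, hσ⟩
    set B : Fin n → Fin n → Prop := fun i j => A (σ i) (σ j) with hB
    have hBsym : ∀ u v, B u v → B v u := fun u v h => hsym _ _ h
    -- r-value: one more than the greatest neighbour, in ℕ (0 if none)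
    set rn : Fin n → ℕ := fun i =>
      (Finset.univ.filter (fun j => B i j)).sup (fun j : Fin n => (j : ℕ) + 1) with hrn
    set rB : Fin n → ℝ := fun i => (rn i : ℝ) - 1 with hrB
    set lB : Fin n → ℝ := fun i => (i : ℝ) with hlB
    have fact1 : ∀ i j : Fin n, B i j → (j : ℝ) ≤ rB i := by
      intro i j hij
      have : (j : ℕ) + 1 ≤ rn i :=
        Finset.le_sup (f := fun j : Fin n => (j : ℕ) + 1)
          (Finset.mem_filter.2 ⟨Finset.mem_univ j, hij⟩)
      have : ((j : ℕ) : ℝ) + 1 ≤ (rn i : ℝ) := by exact_mod_cast this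
      simp only [hrB]
      linarith
    have fact2 : ∀ i v : Fin n, (v : ℝ) ≤ rB i → ∃ j, B i j ∧ (v : ℕ) ≤ (j : ℕ) := by
      intro i v hv
      by_contra hcon
      push_neg at hcon
      have hsup : rn i ≤ (v : ℕ) := by
        apply Finset.sup_le
        intro j hj
        have := hcon j (Finset.mem_filter.1 hj).2
        omega
      have : (rn i : ℝ) ≤ ((v : ℕ) : ℝ) := by exact_mod_cast hsup
      simp only [hrB] at hv
      have : ((v : ℕ) : ℝ) ≤ (rn i : ℝ) - 1 := hv
      linarith
    -- diagonal zeros kill the tail of their row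
    have hdiag : ∀ u : Fin n, ¬ B u u → ∀ k, u < k → ¬ B u k := by
      intro u hu k hk
      rcases hσ u u hu with h | h
      · exact h k hk
      · exact fun hB' => h k hk (hBsym _ _ hB')
    have key : ∀ u v, B u v ↔ SIGAdj lB rB u v := by
      intro u v
      rw [sigadj_iff]
      constructor
      · intro hBuv
        have hpos : B u u ∨ B v v := by
          by_contra hc
          push_neg at hc
          rcases lt_trichotomy u v with hlt | heq | hlt
          · exact hdiag u hc.1 v hlt hBuv
          · exact hc.1 (heq ▸ hBuv)
          · exact hdiag v hc.2 u hlt (hBsym _ _ hBuv)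
        refine ⟨fact1 v u (hBsym _ _ hBuv), fact1 u v hBuv, ?_⟩
        rcases hpos with hp | hp
        · exact Or.inl (fact1 u u hp)
        · exact Or.inr (fact1 v v hp)
      · rintro ⟨h1, h2, _⟩
        by_contra hcon
        obtain ⟨j₁, hj₁, hvj₁⟩ := fact2 u v h2
        obtain ⟨j₂, hj₂, hvj₂⟩ := fact2 v u h1
        have hne₁ : v < j₁ := by
          rcases lt_or_eq_of_le (show v ≤ j₁ from Fin.le_def.2 hvj₁) with h | h
          · exact h
          · exact absurd (h ▸ hj₁) hcon
        have hne₂ : u < j₂ := by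
          rcases lt_or_eq_of_le (show u ≤ j₂ from Fin.le_def.2 hvj₂) with h | h
          · exact h
          · exact absurd (hBsym _ _ (h ▸ hj₂)) hcon
        rcases hσ u v hcon with h | h
        · exact h j₁ hne₁ hj₁
        · exact h j₂ hne₂ (hBsym _ _ hj₂)
    refine ⟨fun v => lB (σ.symm v), fun v => rB (σ.symm v), fun u v => ?_⟩
    have := key (σ.symm u) (σ.symm v)
    simp only [hB, Equiv.apply_symm_apply] at this
    exact this
end

section
/- If G is a signed-interval graph whose representation uses intervals with pairwise distinct left endpoints, then ordering the vertices by increasing left endpoint gives an ordering of the adjacency matrix in which every 0 entry has either only 0s to its right or only 0s below it. -/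
/-- If `G` is a signed-interval graph whose representation has pairwise distinct
left endpoints, then ordering the vertices by increasing left endpoint, every 0
entry of the adjacency matrix has either only 0s to its right (larger left endpoint
column) or only 0s below it (larger left endpoint row). -/
theorem signed_interval_left_endpoint_order_stair_free {V : Type*}
    (l r : V → ℝ) (hl : Function.Injective l)
    (A : V → V → Prop) (hA : ∀ u v, A u v ↔ SIGAdj l r u v) :
    ∀ u v, ¬ A u v →
      (∀ v', l v < l v' → ¬ A u v') ∨ (∀ u', l u < l u' → ¬ A u' v) := by
  intro u v huv
  rw [hA] at huv
  by_cases h1 : r u < l v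
  · left; intro v' hv' hA'
    rw [hA] at hA'
    rcases hA' with ⟨_, _, _, h⟩ | ⟨_, _, h, _⟩ | ⟨_, _, _, h⟩ <;> linarith
  · by_cases h2 : r v < l u
    · right; intro u' hu' hA'
      rw [hA] at hA'
      rcases hA' with ⟨_, _, h, _⟩ | ⟨_, _, _, h⟩ | ⟨_, _, h, _⟩ <;> linarith
    · exfalso; apply huv
      push_neg at h1 h2
      rcases le_or_gt (l u) (r u) with hu | hu
      · rcases le_or_gt (l v) (r v) with hv | hv
        · exact Or.inl ⟨hu, hv, h2, h1⟩
        · exact Or.inr (Or.inr ⟨hv, hu, h2, h1⟩)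
      · rcases le_or_gt (l v) (r v) with hv | hv
        · exact Or.inr (Or.inl ⟨hu, hv, h1, h2⟩)
        · exact absurd h1 (by linarith)
end

section
/- A graph G is a co-TT graph if and only if to each vertex v one can assign positive real numbers a_v and b_v such that xy is an edge if and only if a_x ≤ b_y and a_y ≤ b_x. -/
/-- `G` is a threshold tolerance graph: each vertex has a positive weight and a
positive tolerance, and `u v` is an edge iff `w u + w v > min (t u) (t v)`. -/
def IsThresholdTolerance {V : Type*} (G : SimpleGraph V) : Prop :=
  ∃ w t : V → ℝ, (∀ v, 0 < w v) ∧ (∀ v, 0 < t v) ∧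
    ∀ u v, u ≠ v → (G.Adj u v ↔ min (t u) (t v) < w u + w v)

/-- A graph is co-TT (the complement of a threshold tolerance graph) iff one can
assign positive reals `a v, b v` to each vertex so that `x y` is an edge iff
`a x ≤ b y` and `a y ≤ b x`. -/
theorem coTT_iff_positive_pair_assignment {V : Type*} [Fintype V] (G : SimpleGraph V) :
    IsThresholdTolerance Gᶜ ↔
      ∃ a b : V → ℝ, (∀ v, 0 < a v) ∧ (∀ v, 0 < b v) ∧
        ∀ x y, x ≠ y → (G.Adj x y ↔ a x ≤ b y ∧ a y ≤ b x) := by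
  classical
  constructor
  · rintro ⟨w, t, hw, ht, h⟩
    set s : ℝ := ∑ v, |t v - w v| with hs
    have hs0 : 0 ≤ s := Finset.sum_nonneg fun v _ => abs_nonneg _
    have hMb : ∀ v, t v - w v < 2 + s := by
      intro v
      have h1 : |t v - w v| ≤ s :=
        Finset.single_le_sum (fun i _ => abs_nonneg (t i - w i)) (Finset.mem_univ v)
      have h2 : t v - w v ≤ |t v - w v| := le_abs_self _
      linarith
    have hiso : ∀ x y, x ≠ y → t x ≤ w x → ¬ G.Adj x y := by
      intro x y hxy hx
      have hc := (h x y hxy).2 (by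
        have h1 : min (t x) (t y) ≤ t x := min_le_left _ _
        have h2 := hw y
        linarith)
      exact ((SimpleGraph.compl_adj G x y).mp hc).2
    refine ⟨fun v => if t v ≤ w v then 2 + s else w v,
            fun v => if t v ≤ w v then 1 else t v - w v, ?_, ?_, ?_⟩
    · intro v
      dsimp only
      by_cases hv : t v ≤ w v
      · rw [if_pos hv]; linarith
      · rw [if_neg hv]; exact hw v
    · intro v
      dsimp only
      by_cases hv : t v ≤ w v
      · rw [if_pos hv]; norm_num
      · rw [if_neg hv]; push_neg at hv; linarith
    · intro x y hxy
      dsimp only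
      by_cases hx : t x ≤ w x
      · simp only [if_pos hx]
        constructor
        · intro ha; exact absurd ha (hiso x y hxy hx)
        · rintro ⟨h1, h2⟩
          by_cases hy : t y ≤ w y
          · rw [if_pos hy] at h1; linarith
          · rw [if_neg hy] at h1; linarith [hMb y]
      · by_cases hy : t y ≤ w y
        · simp only [if_pos hy, if_neg hx]
          constructor
          · intro ha; exact absurd ha.symm (hiso y x hxy.symm hy)
          · rintro ⟨h1, h2⟩
            linarith [hMb x]
        · simp only [if_neg hx, if_neg hy]
          have hc := h x y hxy
          rw [SimpleGraph.compl_adj] at hc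
          push_neg at hx hy
          constructor
          · intro ha
            have hnc : ¬ (min (t x) (t y) < w x + w y) := by
              intro hlt
              exact (hc.mpr hlt).2 ha
            rw [min_lt_iff, not_or, not_lt, not_lt] at hnc
            exact ⟨by linarith [hnc.2], by linarith [hnc.1]⟩
          · rintro ⟨h1, h2⟩
            by_contra hna
            have hm := hc.mp ⟨hxy, hna⟩
            rw [min_lt_iff] at hm
            rcases hm with h3 | h3 <;> linarith
  · rintro ⟨a, b, ha, hb, h⟩
    refine ⟨a, fun v => a v + b v, ha, fun v => add_pos (ha v) (hb v), ?_⟩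
    intro u v huv
    dsimp only
    rw [SimpleGraph.compl_adj]
    constructor
    · rintro ⟨-, hna⟩
      rw [h u v huv] at hna
      push_neg at hna
      rw [min_lt_iff]
      by_cases hc : a u ≤ b v
      · exact Or.inl (by linarith [hna hc])
      · push_neg at hc; exact Or.inr (by linarith)
    · intro hlt
      refine ⟨huv, ?_⟩
      rw [h u v huv]
      rw [min_lt_iff] at hlt
      rintro ⟨h1, h2⟩
      rcases hlt with h3 | h3 <;> linarith
end

section
/- A graph G is a split graph if and only if G contains no induced subgraph isomorphic to 2K_2, C_4, or C_5. -/
/-- A split graph: the vertex set partitions into a clique and an independent set. -/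
def IsSplit {V : Type*} (G : SimpleGraph V) : Prop :=
  ∃ K S : Set V, K ∪ S = Set.univ ∧ K ∩ S = ∅ ∧
    G.IsClique K ∧ ∀ u ∈ S, ∀ v ∈ S, ¬ G.Adj u v

/-- `G` contains an induced `2K₂`: four distinct vertices whose only edges among
them are `f 0 — f 1` and `f 2 — f 3`. -/
def HasInducedTwoKTwo {V : Type*} (G : SimpleGraph V) : Prop :=
  ∃ f : Fin 4 → V, Function.Injective f ∧
    ∀ i j : Fin 4, G.Adj (f i) (f j) ↔
      ((i = 0 ∧ j = 1) ∨ (i = 1 ∧ j = 0) ∨ (i = 2 ∧ j = 3) ∨ (i = 3 ∧ j = 2))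

/-- `G` contains an induced cycle `C_n`. -/
def HasInducedCycle {V : Type*} (G : SimpleGraph V) (n : ℕ) : Prop :=
  ∃ f : ZMod n → V, Function.Injective f ∧
    ∀ i j : ZMod n, G.Adj (f i) (f j) ↔ (j = i + 1 ∨ i = j + 1)

section Aux

variable {V : Type*} (G : SimpleGraph V)

lemma aux2K2 {a b c d : V}
    (hab : G.Adj a b) (hcd : G.Adj c d)
    (hac : ¬G.Adj a c) (had : ¬G.Adj a d) (hbc : ¬G.Adj b c) (hbd : ¬G.Adj b d)
    (nac : a ≠ c) (nad : a ≠ d) (nbc : b ≠ c) (nbd : b ≠ d) :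
    HasInducedTwoKTwo G := by
  have nab := hab.ne
  have ncd := hcd.ne
  have hba := hab.symm
  have hdc := hcd.symm
  have hca : ¬G.Adj c a := fun h => hac h.symm
  have hda : ¬G.Adj d a := fun h => had h.symm
  have hcb : ¬G.Adj c b := fun h => hbc h.symm
  have hdb : ¬G.Adj d b := fun h => hbd h.symm
  refine ⟨![a,b,c,d], ?_, ?_⟩
  · intro i j h
    fin_cases i <;> fin_cases j <;> simp_all
  · intro i j
    fin_cases i <;> fin_cases j <;> simp_all

lemma auxC4 {a b c d : V}
    (hab : G.Adj a b) (hbc : G.Adj b c) (hcd : G.Adj c d) (hda : G.Adj d a)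
    (hac : ¬G.Adj a c) (hbd : ¬G.Adj b d)
    (nac : a ≠ c) (nbd : b ≠ d) :
    HasInducedCycle G 4 := by
  have nab := hab.ne
  have nbc := hbc.ne
  have ncd := hcd.ne
  have nda := hda.ne
  have hba := hab.symm; have hcb := hbc.symm; have hdc := hcd.symm; have had := hda.symm
  have hca : ¬G.Adj c a := fun h => hac h.symm
  have hdb : ¬G.Adj d b := fun h => hbd h.symm
  have hcases : ∀ i : ZMod 4, i = 0 ∨ i = 1 ∨ i = 2 ∨ i = 3 := by decide
  refine ⟨![a,b,c,d], ?_, ?_⟩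
  · intro i j h
    rcases hcases i with rfl|rfl|rfl|rfl <;> rcases hcases j with rfl|rfl|rfl|rfl <;>
      simp_all
  · intro i j
    rcases hcases i with rfl|rfl|rfl|rfl <;> rcases hcases j with rfl|rfl|rfl|rfl <;>
      simp_all <;> decide

lemma auxC5 {a b c d e : V}
    (hab : G.Adj a b) (hbc : G.Adj b c) (hcd : G.Adj c d) (hde : G.Adj d e)
    (hea : G.Adj e a)
    (hac : ¬G.Adj a c) (hbd : ¬G.Adj b d) (hce : ¬G.Adj c e) (hda : ¬G.Adj d a)
    (heb : ¬G.Adj e b)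
    (nac : a ≠ c) (nbd : b ≠ d) (nce : c ≠ e) (nda : d ≠ a) (neb : e ≠ b) :
    HasInducedCycle G 5 := by
  have nab := hab.ne
  have nbc := hbc.ne
  have ncd := hcd.ne
  have nde := hde.ne
  have nea := hea.ne
  have hba := hab.symm; have hcb := hbc.symm; have hdc := hcd.symm
  have hed := hde.symm; have hae := hea.symm
  have hca : ¬G.Adj c a := fun h => hac h.symm
  have hdb : ¬G.Adj d b := fun h => hbd h.symm
  have hec : ¬G.Adj e c := fun h => hce h.symm
  have had : ¬G.Adj a d := fun h => hda h.symm
  have hbe : ¬G.Adj b e := fun h => heb h.symm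
  have hcases : ∀ i : ZMod 5, i = 0 ∨ i = 1 ∨ i = 2 ∨ i = 3 ∨ i = 4 := by decide
  refine ⟨![a,b,c,d,e], ?_, ?_⟩
  · intro i j h
    rcases hcases i with rfl|rfl|rfl|rfl|rfl <;> rcases hcases j with rfl|rfl|rfl|rfl|rfl <;>
      simp_all
  · intro i j
    rcases hcases i with rfl|rfl|rfl|rfl|rfl <;> rcases hcases j with rfl|rfl|rfl|rfl|rfl <;>
      simp_all <;> decide

end Aux

open Finset in
/-- counting the "bad" adjacent pairs outside a clique -/
lemma swap_count {V : Type*} [Fintype V] [DecidableEq V] (G : SimpleGraph V)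
    [DecidableRel G.Adj] {K : Finset V} {x y z : V}
    (hx : x ∉ K) (hy : y ∉ K) (hz : z ∈ K)
    (hxy : G.Adj x y) (hzy : ¬ G.Adj z y)
    (hsub : ∀ w, w ∉ K → w ≠ x → G.Adj z w → G.Adj x w) :
    (Finset.univ.filter fun p : V × V =>
        G.Adj p.1 p.2 ∧ p.1 ∉ insert x (K.erase z) ∧ p.2 ∉ insert x (K.erase z)).card <
    (Finset.univ.filter fun p : V × V => G.Adj p.1 p.2 ∧ p.1 ∉ K ∧ p.2 ∉ K).card := by
  set K' : Finset V := insert x (K.erase z) with hK'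
  set φ : V → V := fun v => if v = z then x else v with hφ
  set A := Finset.univ.filter fun p : V × V => G.Adj p.1 p.2 ∧ p.1 ∉ K' ∧ p.2 ∉ K' with hA
  set B := Finset.univ.filter fun p : V × V => G.Adj p.1 p.2 ∧ p.1 ∉ K ∧ p.2 ∉ K with hB
  have hco : ∀ u, u ∉ K' → u ≠ x ∧ (u ∈ K → u = z) := by
    intro u hu
    constructor
    · intro h; exact hu (by simp [hK', h])
    · intro huK
      by_contra huz
      exact hu (by simp [hK', Finset.mem_erase, huz, huK])
  have hφK : ∀ u, u ∉ K' → φ u ∉ K := by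
    intro u hu
    obtain ⟨hux, huz⟩ := hco u hu
    by_cases h : u = z
    · simp [hφ, h, hx]
    · simp only [hφ, if_neg h]
      intro hK; exact h (huz hK)
  have hφadj : ∀ p ∈ A, G.Adj (φ p.1) (φ p.2) := by
    intro p hp
    simp only [hA, Finset.mem_filter] at hp
    obtain ⟨-, hadj, h1, h2⟩ := hp
    by_cases e1 : p.1 = z <;> by_cases e2 : p.2 = z
    · exact absurd (e1 ▸ e2 ▸ hadj) (G.irrefl)
    · have h2K : p.2 ∉ K := fun h => e2 ((hco p.2 h2).2 h)
      have := hsub p.2 h2K (hco p.2 h2).1 (e1 ▸ hadj)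
      simp only [hφ, if_pos e1, if_neg e2]
      exact this
    · have h1K : p.1 ∉ K := fun h => e1 ((hco p.1 h1).2 h)
      have := hsub p.1 h1K (hco p.1 h1).1 (e2 ▸ hadj.symm)
      simp only [hφ, if_neg e1, if_pos e2]
      exact this.symm
    · simpa only [hφ, if_neg e1, if_neg e2] using hadj
  have hmaps : ∀ p ∈ A, (φ p.1, φ p.2) ∈ B.erase (x, y) := by
    intro p hp
    have hadj' := hφadj p hp
    simp only [hA, Finset.mem_filter] at hp
    obtain ⟨-, hadj, h1, h2⟩ := hp
    refine Finset.mem_erase.2 ⟨?_, ?_⟩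
    · intro hxy'
      have e1 : φ p.1 = x := congrArg Prod.fst hxy'
      have e2 : φ p.2 = y := congrArg Prod.snd hxy'
      have hp1 : p.1 = z := by
        by_contra h
        exact (hco p.1 h1).1 (by simpa [hφ, if_neg h] using e1)
      have hp2 : p.2 = y := by
        by_cases h : p.2 = z
        · exact absurd (by simpa [hφ, if_pos h] using e2) hxy.ne
        · simpa [hφ, if_neg h] using e2
      exact hzy (hp1 ▸ hp2 ▸ hadj)
    · simp only [hB, Finset.mem_filter]
      exact ⟨Finset.mem_univ _, hadj', hφK _ h1, hφK _ h2⟩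
  have hinj : Set.InjOn (fun p : V × V => (φ p.1, φ p.2)) A := by
    have φinj : ∀ u v : V, u ≠ x → v ≠ x → φ u = φ v → u = v := by
      intro u v hu hv h
      by_cases e1 : u = z <;> by_cases e2 : v = z
      · rw [e1, e2]
      · exact absurd (by simpa [hφ, if_pos e1, if_neg e2] using h.symm) hv
      · exact absurd (by simpa [hφ, if_neg e1, if_pos e2] using h) hu
      · simpa [hφ, if_neg e1, if_neg e2] using h
    intro p hp q hq h
    simp only [hA, Finset.coe_filter, Set.mem_setOf_eq] at hp hq
    have hpx1 := (hco p.1 hp.2.2.1).1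
    have hpx2 := (hco p.2 hp.2.2.2).1
    have hqx1 := (hco q.1 hq.2.2.1).1
    have hqx2 := (hco q.2 hq.2.2.2).1
    have e1 : φ p.1 = φ q.1 := congrArg Prod.fst h
    have e2 : φ p.2 = φ q.2 := congrArg Prod.snd h
    exact Prod.ext (φinj _ _ hpx1 hqx1 e1) (φinj _ _ hpx2 hqx2 e2)
  have hxyB : (x, y) ∈ B := by
    simp only [hB, Finset.mem_filter]
    exact ⟨Finset.mem_univ _, hxy, hx, hy⟩
  calc A.card ≤ (B.erase (x, y)).card := Finset.card_le_card_of_injOn _ hmaps hinj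
    _ < B.card := Finset.card_erase_lt_of_mem hxyB

theorem split_iff_no_2K2_C4_C5 {V : Type*} [Fintype V] (G : SimpleGraph V) :
    IsSplit G ↔
      ¬ HasInducedTwoKTwo G ∧ ¬ HasInducedCycle G 4 ∧ ¬ HasInducedCycle G 5 := by
  classical
  constructor
  · rintro ⟨K, S, hU, hI, hclq, hind⟩
    have hmem : ∀ v : V, v ∈ K ∨ v ∈ S := by
      intro v
      have : v ∈ K ∪ S := hU ▸ Set.mem_univ v
      exact this
    refine ⟨?_, ?_, ?_⟩
    · rintro ⟨f, hinj, hf⟩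
      have a01 : G.Adj (f 0) (f 1) := (hf 0 1).mpr (by decide)
      have a23 : G.Adj (f 2) (f 3) := (hf 2 3).mpr (by decide)
      have n02 : ¬ G.Adj (f 0) (f 2) := fun h => absurd ((hf 0 2).mp h) (by decide)
      have n03 : ¬ G.Adj (f 0) (f 3) := fun h => absurd ((hf 0 3).mp h) (by decide)
      have n12 : ¬ G.Adj (f 1) (f 2) := fun h => absurd ((hf 1 2).mp h) (by decide)
      have n13 : ¬ G.Adj (f 1) (f 3) := fun h => absurd ((hf 1 3).mp h) (by decide)
      have ne02 : f 0 ≠ f 2 := fun h => absurd (hinj h) (by decide)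
      have ne03 : f 0 ≠ f 3 := fun h => absurd (hinj h) (by decide)
      have ne12 : f 1 ≠ f 2 := fun h => absurd (hinj h) (by decide)
      have ne13 : f 1 ≠ f 3 := fun h => absurd (hinj h) (by decide)
      have h01 : f 0 ∈ K ∨ f 1 ∈ K := by
        rcases hmem (f 0) with h|h
        · exact Or.inl h
        · rcases hmem (f 1) with h'|h'
          · exact Or.inr h'
          · exact absurd a01 (hind _ h _ h')
      have h23 : f 2 ∈ K ∨ f 3 ∈ K := by
        rcases hmem (f 2) with h|h
        · exact Or.inl h
        · rcases hmem (f 3) with h'|h'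
          · exact Or.inr h'
          · exact absurd a23 (hind _ h _ h')
      rcases h01 with h|h <;> rcases h23 with h'|h'
      · exact n02 (hclq h h' ne02)
      · exact n03 (hclq h h' ne03)
      · exact n12 (hclq h h' ne12)
      · exact n13 (hclq h h' ne13)
    · rintro ⟨f, hinj, hf⟩
      have a01 : G.Adj (f 0) (f 1) := (hf 0 1).mpr (by decide)
      have a12 : G.Adj (f 1) (f 2) := (hf 1 2).mpr (by decide)
      have a23 : G.Adj (f 2) (f 3) := (hf 2 3).mpr (by decide)
      have a30 : G.Adj (f 3) (f 0) := (hf 3 0).mpr (by decide)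
      have n02 : ¬ G.Adj (f 0) (f 2) := fun h => absurd ((hf 0 2).mp h) (by decide)
      have n13 : ¬ G.Adj (f 1) (f 3) := fun h => absurd ((hf 1 3).mp h) (by decide)
      have ne02 : f 0 ≠ f 2 := fun h => absurd (hinj h) (by decide)
      have ne13 : f 1 ≠ f 3 := fun h => absurd (hinj h) (by decide)
      have s02 : f 0 ∈ S ∨ f 2 ∈ S := by
        rcases hmem (f 0) with h|h
        · rcases hmem (f 2) with h'|h'
          · exact absurd (hclq h h' ne02) n02
          · exact Or.inr h'
        · exact Or.inl h
      have s13 : f 1 ∈ S ∨ f 3 ∈ S := by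
        rcases hmem (f 1) with h|h
        · rcases hmem (f 3) with h'|h'
          · exact absurd (hclq h h' ne13) n13
          · exact Or.inr h'
        · exact Or.inl h
      rcases s02 with h|h <;> rcases s13 with h'|h'
      · exact hind _ h _ h' a01
      · exact hind _ h _ h' a30.symm
      · exact hind _ h _ h' a12.symm
      · exact hind _ h _ h' a23
    · rintro ⟨f, hinj, hf⟩
      have a01 : G.Adj (f 0) (f 1) := (hf 0 1).mpr (by decide)
      have a12 : G.Adj (f 1) (f 2) := (hf 1 2).mpr (by decide)
      have a23 : G.Adj (f 2) (f 3) := (hf 2 3).mpr (by decide)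
      have a34 : G.Adj (f 3) (f 4) := (hf 3 4).mpr (by decide)
      have a40 : G.Adj (f 4) (f 0) := (hf 4 0).mpr (by decide)
      have n02 : ¬ G.Adj (f 0) (f 2) := fun h => absurd ((hf 0 2).mp h) (by decide)
      have n13 : ¬ G.Adj (f 1) (f 3) := fun h => absurd ((hf 1 3).mp h) (by decide)
      have n24 : ¬ G.Adj (f 2) (f 4) := fun h => absurd ((hf 2 4).mp h) (by decide)
      have n30 : ¬ G.Adj (f 3) (f 0) := fun h => absurd ((hf 3 0).mp h) (by decide)
      have n41 : ¬ G.Adj (f 4) (f 1) := fun h => absurd ((hf 4 1).mp h) (by decide)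
      have ne02 : f 0 ≠ f 2 := fun h => absurd (hinj h) (by decide)
      have ne13 : f 1 ≠ f 3 := fun h => absurd (hinj h) (by decide)
      have ne24 : f 2 ≠ f 4 := fun h => absurd (hinj h) (by decide)
      have ne30 : f 3 ≠ f 0 := fun h => absurd (hinj h) (by decide)
      have ne41 : f 4 ≠ f 1 := fun h => absurd (hinj h) (by decide)
      have hE0 : f 0 ∈ S → f 1 ∈ S → False := fun h h' => hind _ h _ h' a01
      have hE1 : f 1 ∈ S → f 2 ∈ S → False := fun h h' => hind _ h _ h' a12
      have hE2 : f 2 ∈ S → f 3 ∈ S → False := fun h h' => hind _ h _ h' a23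
      have hE3 : f 3 ∈ S → f 4 ∈ S → False := fun h h' => hind _ h _ h' a34
      have hE4 : f 4 ∈ S → f 0 ∈ S → False := fun h h' => hind _ h _ h' a40
      have hN0 : f 0 ∈ K → f 2 ∈ K → False := fun h h' => n02 (hclq h h' ne02)
      have hN1 : f 1 ∈ K → f 3 ∈ K → False := fun h h' => n13 (hclq h h' ne13)
      have hN2 : f 2 ∈ K → f 4 ∈ K → False := fun h h' => n24 (hclq h h' ne24)
      have hN3 : f 3 ∈ K → f 0 ∈ K → False := fun h h' => n30 (hclq h h' ne30)
      have hN4 : f 4 ∈ K → f 1 ∈ K → False := fun h h' => n41 (hclq h h' ne41)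
      rcases hmem (f 0) with h0|h0
      · rcases hmem (f 2) with h2|h2
        · exact hN0 h0 h2
        · rcases hmem (f 3) with h3|h3
          · exact hN3 h3 h0
          · exact hE2 h2 h3
      · rcases hmem (f 1) with h1|h1
        · rcases hmem (f 4) with h4|h4
          · exact hN4 h4 h1
          · exact hE4 h4 h0
        · exact hE0 h0 h1
  · rintro ⟨h2, h4, h5⟩
    -- choose a maximum clique K minimizing the number of adjacent pairs outside K
    have hne : (Finset.univ.filter fun K : Finset V => G.IsClique (K : Set V)).Nonempty :=
      ⟨∅, by simp⟩
    obtain ⟨K0, hK0, hmax0⟩ :=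
      Finset.exists_max_image (Finset.univ.filter fun K : Finset V => G.IsClique (K : Set V))
        Finset.card hne
    set m := K0.card with hm
    set bad : Finset V → ℕ := fun K =>
      (Finset.univ.filter fun p : V × V => G.Adj p.1 p.2 ∧ p.1 ∉ K ∧ p.2 ∉ K).card with hbad
    have hne2 : ((Finset.univ.filter fun K : Finset V => G.IsClique (K : Set V)).filter
        fun K => K.card = m).Nonempty := ⟨K0, Finset.mem_filter.2 ⟨hK0, rfl⟩⟩
    obtain ⟨K, hKmem, hmin⟩ :=
      Finset.exists_min_image _ bad hne2
    simp only [Finset.mem_filter, Finset.mem_univ, true_and] at hKmem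
    obtain ⟨hclq, hcard⟩ := hKmem
    have hmaxK : ∀ K' : Finset V, G.IsClique (K' : Set V) → K'.card ≤ m := by
      intro K' h
      exact hmax0 K' (by simp [h])
    have hminK : ∀ K' : Finset V, G.IsClique (K' : Set V) → K'.card = m → bad K ≤ bad K' := by
      intro K' h h'
      exact hmin K' (by simp [Finset.mem_filter, h, h'])
    -- the key claim
    have key : ∀ x y : V, x ∉ K → y ∉ K → G.Adj x y →
        (∀ b ∈ K, G.Adj y b → G.Adj x b) → False := by
      intro x y hx hy hxy hAll
      -- at most one common non-neighbor in K
      have hD1 : ∀ z1 ∈ K, ∀ z2 ∈ K, z1 ≠ z2 →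
          ¬G.Adj x z1 → ¬G.Adj y z1 → ¬G.Adj x z2 → ¬G.Adj y z2 → False := by
        intro z1 hz1 z2 hz2 hne hx1 hy1 hx2 hy2
        exact h2 (aux2K2 G hxy (hclq hz1 hz2 hne) hx1 hx2 hy1 hy2
          (fun h => hx (h ▸ hz1)) (fun h => hx (h ▸ hz2))
          (fun h => hy (h ▸ hz1)) (fun h => hy (h ▸ hz2)))
      -- x has a non-neighbor z in K
      obtain ⟨z, hzK, hxz⟩ : ∃ z ∈ K, ¬ G.Adj x z := by
        by_contra hcon
        push_neg at hcon
        have hclq' : G.IsClique ((insert x K : Finset V) : Set V) := by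
          rw [Finset.coe_insert]
          exact hclq.insert fun b hb hbx => (hcon b hb).symm.symm
        have := hmaxK _ hclq'
        rw [Finset.card_insert_of_notMem hx, hcard] at this
        omega
      have hyz : ¬ G.Adj y z := fun h => hxz (hAll z hzK h)
      have hm1 : 1 ≤ m := hcard ▸ Finset.card_pos.2 ⟨z, hzK⟩
      -- x is adjacent to everything in K except z
      have hxall : ∀ v ∈ K, v ≠ z → G.Adj x v := by
        intro v hv hvz
        by_contra hnx
        by_cases hny : G.Adj y v
        · exact hnx (hAll v hv hny)
        · exact hD1 z hzK v hv (Ne.symm hvz) hxz hyz hnx hny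
      -- there is a ∈ K adjacent to x but not y
      obtain ⟨a, haK, hxa, hya⟩ : ∃ a ∈ K, G.Adj x a ∧ ¬ G.Adj y a := by
        by_contra hcon
        push_neg at hcon
        have yall : ∀ v ∈ K, v ≠ z → G.Adj y v := fun v hv hvz =>
          hcon v hv (hxall v hv hvz)
        have hxyne := hxy.ne
        have hclqE : G.IsClique ((K.erase z : Finset V) : Set V) :=
          hclq.subset (by simp [Finset.erase_subset])
        have hclqY : G.IsClique (insert y ((K.erase z : Finset V) : Set V)) := by
          refine hclqE.insert ?_
          intro b hb hby
          simp only [Finset.coe_erase, Set.mem_diff, Finset.mem_coe] at hb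
          exact (yall b hb.1 (by simpa using hb.2)).symm.symm
        have hclqXY : G.IsClique (insert x (insert y ((K.erase z : Finset V) : Set V))) := by
          refine hclqY.insert ?_
          intro b hb hbx
          rcases hb with rfl | hb
          · exact hxy
          · simp only [Finset.coe_erase, Set.mem_diff, Finset.mem_coe] at hb
            exact hxall b hb.1 (by simpa using hb.2)
        have hclqF : G.IsClique ((insert x (insert y (K.erase z)) : Finset V) : Set V) := by
          simpa using hclqXY
        have hle := hmaxK _ hclqF
        have hyne : y ∉ insert y (K.erase z) → False := by simp
        have c1 : (K.erase z).card = m - 1 := by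
          rw [Finset.card_erase_of_mem hzK, hcard]
        have hyni : y ∉ K.erase z := fun h => hy (Finset.mem_of_mem_erase h)
        have hxni : x ∉ insert y (K.erase z) := by
          simp only [Finset.mem_insert]
          rintro (rfl | h)
          · exact hxyne rfl
          · exact hx (Finset.mem_of_mem_erase h)
        rw [Finset.card_insert_of_notMem hxni, Finset.card_insert_of_notMem hyni, c1] at hle
        omega
      have haz : a ≠ z := fun h => hxz (h ▸ hxa)
      -- the exchanged clique
      have hxniE : x ∉ K.erase z := fun h => hx (Finset.mem_of_mem_erase h)
      have hclqE : G.IsClique ((K.erase z : Finset V) : Set V) :=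
        hclq.subset (by simp [Finset.erase_subset])
      have hclqK' : G.IsClique ((insert x (K.erase z) : Finset V) : Set V) := by
        rw [Finset.coe_insert]
        refine hclqE.insert ?_
        intro b hb hbx
        simp only [Finset.coe_erase, Set.mem_diff, Finset.mem_coe] at hb
        exact (hxall b hb.1 (by simpa using hb.2)).symm.symm
      have hcardK' : (insert x (K.erase z)).card = m := by
        rw [Finset.card_insert_of_notMem hxniE, Finset.card_erase_of_mem hzK, hcard]
        omega
      have hle := hminK _ hclqK' hcardK'
      -- get the vertex w
      obtain ⟨w, hwK, hwx, hzw, hxw⟩ : ∃ w, w ∉ K ∧ w ≠ x ∧ G.Adj z w ∧ ¬ G.Adj x w := by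
        by_contra hcon
        push_neg at hcon
        have := swap_count G hx hy hzK hxy (fun h => hyz h.symm) hcon
        simp only [hbad] at hle
        omega
      have hwy : w ≠ y := fun h => hyz (h ▸ hzw).symm
      have hwz : w ≠ z := fun h => hzw.ne h.symm
      have hwa : w ≠ a := fun h => hwK (h ▸ haK)
      by_cases hyw : G.Adj y w
      · by_cases haw : G.Adj a w
        · -- C4 : x - a - w - y - x
          refine h4 (auxC4 G hxa haw hyw.symm hxy.symm hxw
            (fun h => hya h.symm) (fun h => hwx h.symm) ?_)
          exact fun h => hy (h ▸ haK)
        · -- C5 : a - x - y - w - z - a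
          refine h5 (auxC5 G hxa.symm hxy hyw hzw.symm (hclq hzK haK (Ne.symm haz))
            (fun h => hya h.symm) hxw hyz
            (fun h => haw h.symm) (fun h => hxz h.symm)
            (fun h => hy (h.symm ▸ haK)) hwx.symm (fun h => hy (h ▸ hzK)) ?_ ?_)
          · exact fun h => hwK (h ▸ haK)
          · exact fun h => hx (h.symm ▸ hzK)
      · -- 2K2 : xy and zw
        refine h2 (aux2K2 G hxy hzw hxz hxw hyz hyw
          (fun h => hx (h ▸ hzK)) (Ne.symm hwx) (fun h => hy (h ▸ hzK)) (Ne.symm hwy))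
    refine ⟨(K : Set V), ((K : Set V))ᶜ, by simp, by simp, hclq, ?_⟩
    intro u hu v hv hadj
    simp only [Set.mem_compl_iff, Finset.mem_coe] at hu hv
    by_cases hB : ∀ b ∈ K, G.Adj v b → G.Adj u b
    · exact key u v hu hv hadj hB
    · by_cases hA : ∀ b ∈ K, G.Adj u b → G.Adj v b
      · exact key v u hv hu hadj.symm hA
      · push_neg at hA hB
        obtain ⟨a, haK, hua, hva⟩ := hA
        obtain ⟨b, hbK, hvb, hub⟩ := hB
        have hab : a ≠ b := fun h => hub (h ▸ hua)
        refine h4 (auxC4 G hua (hclq haK hbK hab) hvb.symm hadj.symm hub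
          (fun h => hva h.symm) (fun h => hu (h ▸ hbK)) (fun h => hv (h.symm ▸ haK)))
end

section
/- The graph W — obtained from a path x_1 x_2 x_3 x_4 x_5 by adding a vertex y adjacent only to x_3 and a vertex r adjacent to all of x_1, x_2, x_3, x_4, x_5 — is not a co-TT graph. -/
/-- `G` is a co-TT (signed-interval) graph. -/
def IsCoTT {V : Type*} (G : SimpleGraph V) : Prop :=
  ∃ l r : V → ℝ, ∀ u v : V, u ≠ v → (G.Adj u v ↔ l u ≤ r v ∧ l v ≤ r u)

/-- The graph `W`: path `x₁x₂x₃x₄x₅` (vertices `0,…,4`), vertex `y = 5` adjacent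
only to `x₃ = 2`, and vertex `r = 6` adjacent to all of `x₁,…,x₅`. -/
def Wgraph : SimpleGraph (Fin 7) := SimpleGraph.fromRel (fun a b =>
  (a = 0 ∧ b = 1) ∨ (a = 1 ∧ b = 2) ∨ (a = 2 ∧ b = 3) ∨ (a = 3 ∧ b = 4) ∨
  (a = 5 ∧ b = 2) ∨
  (a = 6 ∧ b = 0) ∨ (a = 6 ∧ b = 1) ∨ (a = 6 ∧ b = 2) ∨ (a = 6 ∧ b = 3) ∨
  (a = 6 ∧ b = 4))

theorem Wgraph_not_isCoTT : ¬ IsCoTT Wgraph := by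
  rintro ⟨l, r, h⟩
  have adj : ∀ u v : Fin 7, u ≠ v → Wgraph.Adj u v → l u ≤ r v ∧ l v ≤ r u :=
    fun u v hne => (h u v hne).mp
  have nadj : ∀ u v : Fin 7, u ≠ v → ¬ Wgraph.Adj u v → r v < l u ∨ r u < l v := by
    intro u v hne hn
    have := (h u v hne).not.mp hn
    rcases not_and_or.mp this with h1 | h1
    · exact Or.inl (lt_of_not_ge h1)
    · exact Or.inr (lt_of_not_ge h1)
  have e01 := adj 0 1 (by decide) (by rw [Wgraph, SimpleGraph.fromRel_adj]; decide)
  have e12 := adj 1 2 (by decide) (by rw [Wgraph, SimpleGraph.fromRel_adj]; decide)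
  have e23 := adj 2 3 (by decide) (by rw [Wgraph, SimpleGraph.fromRel_adj]; decide)
  have e34 := adj 3 4 (by decide) (by rw [Wgraph, SimpleGraph.fromRel_adj]; decide)
  have e52 := adj 5 2 (by decide) (by rw [Wgraph, SimpleGraph.fromRel_adj]; decide)
  have e60 := adj 6 0 (by decide) (by rw [Wgraph, SimpleGraph.fromRel_adj]; decide)
  have e61 := adj 6 1 (by decide) (by rw [Wgraph, SimpleGraph.fromRel_adj]; decide)
  have e62 := adj 6 2 (by decide) (by rw [Wgraph, SimpleGraph.fromRel_adj]; decide)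
  have e63 := adj 6 3 (by decide) (by rw [Wgraph, SimpleGraph.fromRel_adj]; decide)
  have e64 := adj 6 4 (by decide) (by rw [Wgraph, SimpleGraph.fromRel_adj]; decide)
  have n02 := nadj 0 2 (by decide) (by rw [Wgraph, SimpleGraph.fromRel_adj]; decide)
  have n13 := nadj 1 3 (by decide) (by rw [Wgraph, SimpleGraph.fromRel_adj]; decide)
  have n24 := nadj 2 4 (by decide) (by rw [Wgraph, SimpleGraph.fromRel_adj]; decide)
  have n56 := nadj 5 6 (by decide) (by rw [Wgraph, SimpleGraph.fromRel_adj]; decide)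
  obtain ⟨a1, a2⟩ := e01
  obtain ⟨b1, b2⟩ := e12
  obtain ⟨c1, c2⟩ := e23
  obtain ⟨d1, d2⟩ := e34
  obtain ⟨f1, f2⟩ := e52
  obtain ⟨g1, g2⟩ := e60
  obtain ⟨i1, i2⟩ := e61
  obtain ⟨j1, j2⟩ := e62
  obtain ⟨k1, k2⟩ := e63
  obtain ⟨m1, m2⟩ := e64
  rcases n02 with p | p <;> rcases n13 with q | q <;>
    rcases n24 with s | s <;> rcases n56 with t | t <;> linarith
end

section
/- The graph T_0 — consisting of a path v', v, x_0, x_1, w, w', a vertex x adjacent to x_0 and x_1, a vertex u adjacent to x, and a vertex u' adjacent to u — is not a co-TT graph. -/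
/-- The graph `T₀` on vertices `v' = 0, v = 1, x₀ = 2, x = 3, x₁ = 4, w = 5,
w' = 6, u = 7, u' = 8`, with edges `v'v, vx₀, x₀x₁, x₁w, ww', x₀x, xx₁, xu, uu'`. -/
def T0graph : SimpleGraph (Fin 9) := SimpleGraph.fromRel (fun a b =>
  (a = 0 ∧ b = 1) ∨ (a = 1 ∧ b = 2) ∨ (a = 2 ∧ b = 4) ∨ (a = 4 ∧ b = 5) ∨
  (a = 5 ∧ b = 6) ∨ (a = 2 ∧ b = 3) ∨ (a = 3 ∧ b = 4) ∨ (a = 3 ∧ b = 7) ∨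
  (a = 7 ∧ b = 8))

theorem T0graph_not_isCoTT : ¬ IsCoTT T0graph := by
  rintro ⟨l, r, h⟩
  have ha : ∀ a b : Fin 9, a ≠ b → T0graph.Adj a b → l a ≤ r b ∧ l b ≤ r a :=
    fun a b hne had => (h a b hne).mp had
  have hn : ∀ a b : Fin 9, a ≠ b → ¬ T0graph.Adj a b → l a ≤ r b → r a < l b := by
    intro a b hne hnad hle
    by_contra hc
    push_neg at hc
    exact hnad ((h a b hne).mpr ⟨hle, hc⟩)
  -- edge facts
  obtain ⟨e01a, e01b⟩ := ha 0 1 (by decide) (by unfold T0graph; rw [SimpleGraph.fromRel_adj]; decide)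
  obtain ⟨e12a, e12b⟩ := ha 1 2 (by decide) (by unfold T0graph; rw [SimpleGraph.fromRel_adj]; decide)
  obtain ⟨e24a, e24b⟩ := ha 2 4 (by decide) (by unfold T0graph; rw [SimpleGraph.fromRel_adj]; decide)
  obtain ⟨e45a, e45b⟩ := ha 4 5 (by decide) (by unfold T0graph; rw [SimpleGraph.fromRel_adj]; decide)
  obtain ⟨e56a, e56b⟩ := ha 5 6 (by decide) (by unfold T0graph; rw [SimpleGraph.fromRel_adj]; decide)
  obtain ⟨e23a, e23b⟩ := ha 2 3 (by decide) (by unfold T0graph; rw [SimpleGraph.fromRel_adj]; decide)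
  obtain ⟨e34a, e34b⟩ := ha 3 4 (by decide) (by unfold T0graph; rw [SimpleGraph.fromRel_adj]; decide)
  obtain ⟨e37a, e37b⟩ := ha 3 7 (by decide) (by unfold T0graph; rw [SimpleGraph.fromRel_adj]; decide)
  obtain ⟨e78a, e78b⟩ := ha 7 8 (by decide) (by unfold T0graph; rw [SimpleGraph.fromRel_adj]; decide)
  -- non-edge facts : l a ≤ r b → r a < l b
  have n02 := hn 0 2 (by decide) (by unfold T0graph; rw [SimpleGraph.fromRel_adj]; decide)
  have n13 := hn 1 3 (by decide) (by unfold T0graph; rw [SimpleGraph.fromRel_adj]; decide)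
  have n31 := hn 3 1 (by decide) (by unfold T0graph; rw [SimpleGraph.fromRel_adj]; decide)
  have n14 := hn 1 4 (by decide) (by unfold T0graph; rw [SimpleGraph.fromRel_adj]; decide)
  have n41 := hn 4 1 (by decide) (by unfold T0graph; rw [SimpleGraph.fromRel_adj]; decide)
  have n25 := hn 2 5 (by decide) (by unfold T0graph; rw [SimpleGraph.fromRel_adj]; decide)
  have n52 := hn 5 2 (by decide) (by unfold T0graph; rw [SimpleGraph.fromRel_adj]; decide)
  have n35 := hn 3 5 (by decide) (by unfold T0graph; rw [SimpleGraph.fromRel_adj]; decide)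
  have n53 := hn 5 3 (by decide) (by unfold T0graph; rw [SimpleGraph.fromRel_adj]; decide)
  have n27 := hn 2 7 (by decide) (by unfold T0graph; rw [SimpleGraph.fromRel_adj]; decide)
  have n72 := hn 7 2 (by decide) (by unfold T0graph; rw [SimpleGraph.fromRel_adj]; decide)
  have n47 := hn 4 7 (by decide) (by unfold T0graph; rw [SimpleGraph.fromRel_adj]; decide)
  have n74 := hn 7 4 (by decide) (by unfold T0graph; rw [SimpleGraph.fromRel_adj]; decide)
  have n46 := hn 4 6 (by decide) (by unfold T0graph; rw [SimpleGraph.fromRel_adj]; decide)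
  have n38 := hn 3 8 (by decide) (by unfold T0graph; rw [SimpleGraph.fromRel_adj]; decide)
  -- boundedness of 1, 2, 3, 4, 5, 7
  -- if v is unbounded (r v < l v) then any two neighbors of v are adjacent
  have b1 : l 1 ≤ r 1 := by
    by_contra hb; push_neg at hb
    -- neighbors 0 and 2 of 1 would be adjacent, contradicting n02
    have := n02 (by linarith) -- l 0 ≤ r 1 < l 1 ≤ r 2
    linarith -- r 0 < l 2 but l 2 ≤ r 1 < l 1 ≤ r 0
  have b2 : l 2 ≤ r 2 := by
    by_contra hb; push_neg at hb
    have := n13 (by linarith) -- l 1 ≤ r 2 < l 2 ≤ r 3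
    linarith -- r 1 < l 3; but l 3 ≤ r 2 < l 2 ≤ r 1
  have b3 : l 3 ≤ r 3 := by
    by_contra hb; push_neg at hb
    have := n27 (by linarith) -- l 2 ≤ r 3 < l 3 ≤ r 7
    linarith -- r 2 < l 7; but l 7 ≤ r 3 < l 3 ≤ r 2
  have b4 : l 4 ≤ r 4 := by
    by_contra hb; push_neg at hb
    have := n35 (by linarith) -- l 3 ≤ r 4 < l 4 ≤ r 5
    linarith -- r 3 < l 5; but l 5 ≤ r 4 < l 4 ≤ r 3
  have b5 : l 5 ≤ r 5 := by
    by_contra hb; push_neg at hb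
    have := n46 (by linarith)
    linarith
  have b7 : l 7 ≤ r 7 := by
    by_contra hb; push_neg at hb
    have := n38 (by linarith)
    linarith
  -- the common point m of the triangle intervals
  set m : ℝ := max (l 2) (max (l 3) (l 4)) with hm
  have hl2m : l 2 ≤ m := le_max_left _ _
  have hl3m : l 3 ≤ m := le_trans (le_max_left _ _) (le_max_right _ _)
  have hl4m : l 4 ≤ m := le_trans (le_max_right _ _) (le_max_right _ _)
  have hmr2 : m ≤ r 2 := max_le b2 (max_le e23b e24b)
  have hmr3 : m ≤ r 3 := max_le e23a (max_le b3 e34b)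
  have hmr4 : m ≤ r 4 := max_le e24a (max_le e34a b4)
  -- each of 1, 5, 7 avoids m
  have s1 : r 1 < m ∨ m < l 1 := by
    by_contra hc; push_neg at hc
    have := n13 (by linarith)
    linarith
  have s5 : r 5 < m ∨ m < l 5 := by
    by_contra hc; push_neg at hc
    have := n53 (by linarith)
    linarith
  have s7 : r 7 < m ∨ m < l 7 := by
    by_contra hc; push_neg at hc
    have := n72 (by linarith)
    linarith
  -- two of 1, 5, 7 are on the same side of m: contradiction in each case
  rcases s1 with s1 | s1 <;> rcases s5 with s5 | s5 <;> rcases s7 with s7 | s7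
  · -- 1,5 left: l2 ≤ r1 < l4 ≤ r5 < l2
    have h14 := n14 (by linarith)
    have h52 := n52 (by linarith)
    linarith
  · -- 1,5 left
    have h14 := n14 (by linarith)
    have h52 := n52 (by linarith)
    linarith
  · -- 1,7 left: l2 ≤ r1 < l3 ≤ r7 < l2
    have h13 := n13 (by linarith)
    have h72 := n72 (by linarith)
    linarith
  · -- 5,7 right: l5 ≤ r4 < l7 ≤ r3 < l5
    have h47 := n47 (by linarith)
    have h35 := n35 (by linarith)
    linarith
  · -- 5,7 left: l4 ≤ r5 < l3 ≤ r7 < l4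
    have h53 := n53 (by linarith)
    have h74 := n74 (by linarith)
    linarith
  · -- 1,7 right: l1 ≤ r2, r2 < l7 (n27), l7 ≤ r3, r3 < l1 (n31)
    have h27 := n27 (by linarith)
    have h31 := n31 (by linarith)
    linarith
  · -- 1,5 right: l1 ≤ r2, r2 < l5 (n25), l5 ≤ r4, r4 < l1 (n41)
    have h25 := n25 (by linarith)
    have h41 := n41 (by linarith)
    linarith
  · -- 1,5 right
    have h25 := n25 (by linarith)
    have h41 := n41 (by linarith)
    linarith
end

section
/- For every n ≥ 2 the graph H*_n — obtained from H_n by adding a pendant vertex u' adjacent only to u — is not a co-TT graph. -/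
/-- Base adjacency of `H*_n`.  Vertices: `.inl i` is `x_{i+1}` for `0 ≤ i < n`;
`.inr 0 = w`, `.inr 1 = v`, `.inr 2 = y`, `.inr 3 = z`, `.inr 4 = u`,
`.inr 5 = u'`.  Edges of `H_n` (path `w, x_1, …, x_n, v`; `y` adjacent to `w` and
all `x_i`; `z` adjacent to `v` and all `x_i`; `yz`, `uy`, `uz`) together with the
pendant edge `u'u`. -/
def hstarRel (n : ℕ) (a b : Fin n ⊕ Fin 6) : Prop :=
  (∃ i j : Fin n, a = .inl i ∧ b = .inl j ∧ (j : ℕ) = (i : ℕ) + 1) ∨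
  (∃ i : Fin n, a = .inr 0 ∧ b = .inl i ∧ (i : ℕ) = 0) ∨
  (∃ i : Fin n, a = .inl i ∧ (i : ℕ) + 1 = n ∧ b = .inr 1) ∨
  (a = .inr 2 ∧ b = .inr 0) ∨
  (∃ i : Fin n, a = .inr 2 ∧ b = .inl i) ∨
  (a = .inr 3 ∧ b = .inr 1) ∨
  (∃ i : Fin n, a = .inr 3 ∧ b = .inl i) ∨
  (a = .inr 2 ∧ b = .inr 3) ∨
  (a = .inr 4 ∧ b = .inr 2) ∨ (a = .inr 4 ∧ b = .inr 3) ∨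
  (a = .inr 5 ∧ b = .inr 4)

/-- The graph `H*_n`. -/
def HstarGraph (n : ℕ) : SimpleGraph (Fin n ⊕ Fin 6) :=
  SimpleGraph.fromRel (hstarRel n)

/-- For every `n ≥ 2`, `H*_n` is not a co-TT graph. -/
theorem HstarGraph_not_isCoTT : ∀ n : ℕ, 2 ≤ n → ¬ IsCoTT (HstarGraph n) := by
  rintro n hn ⟨l, r, h⟩
  have hn0 : 0 < n := by omega
  -- helper: from an edge, get the two inequalities
  have adj : ∀ a b : Fin n ⊕ Fin 6, a ≠ b → hstarRel n a b →
      l a ≤ r b ∧ l b ≤ r a := by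
    intro a b hne hr
    exact (h a b hne).mp ((SimpleGraph.fromRel_adj _ a b).mpr ⟨hne, Or.inl hr⟩)
  -- helper: from a non-edge, get the disjunction of strict inequalities
  have nadj : ∀ a b : Fin n ⊕ Fin 6, a ≠ b → ¬ hstarRel n a b → ¬ hstarRel n b a →
      r b < l a ∨ r a < l b := by
    intro a b hne h1 h2
    by_contra hc
    push_neg at hc
    have hadj : (HstarGraph n).Adj a b := (h a b hne).mpr hc
    rcases (SimpleGraph.fromRel_adj _ a b).mp hadj with ⟨-, hor⟩
    exact hor.elim h1 h2
  -- adjacency facts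
  have hu'u : l (.inr 5 : Fin n ⊕ Fin 6) ≤ r (.inr 4) ∧ l (.inr 4) ≤ r (.inr 5) :=
    adj _ _ (by simp) (Or.inr (Or.inr (Or.inr (Or.inr (Or.inr (Or.inr (Or.inr
      (Or.inr (Or.inr (Or.inr ⟨rfl, rfl⟩))))))))))
  have huy : l (.inr 4 : Fin n ⊕ Fin 6) ≤ r (.inr 2) ∧ l (.inr 2) ≤ r (.inr 4) :=
    adj _ _ (by simp) (Or.inr (Or.inr (Or.inr (Or.inr (Or.inr (Or.inr (Or.inr
      (Or.inr (Or.inl ⟨rfl, rfl⟩)))))))))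
  have huz : l (.inr 4 : Fin n ⊕ Fin 6) ≤ r (.inr 3) ∧ l (.inr 3) ≤ r (.inr 4) :=
    adj _ _ (by simp) (Or.inr (Or.inr (Or.inr (Or.inr (Or.inr (Or.inr (Or.inr
      (Or.inr (Or.inr (Or.inl ⟨rfl, rfl⟩))))))))))
  have hzv : l (.inr 3 : Fin n ⊕ Fin 6) ≤ r (.inr 1) ∧ l (.inr 1) ≤ r (.inr 3) :=
    adj _ _ (by simp) (Or.inr (Or.inr (Or.inr (Or.inr (Or.inr (Or.inl ⟨rfl, rfl⟩))))))
  have hyw : l (.inr 2 : Fin n ⊕ Fin 6) ≤ r (.inr 0) ∧ l (.inr 0) ≤ r (.inr 2) :=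
    adj _ _ (by simp) (Or.inr (Or.inr (Or.inr (Or.inl ⟨rfl, rfl⟩))))
  have hwx : l (.inr 0 : Fin n ⊕ Fin 6) ≤ r (.inl ⟨0, hn0⟩) ∧
      l (.inl ⟨0, hn0⟩) ≤ r (.inr 0) :=
    adj _ _ (by simp) (Or.inr (Or.inl ⟨⟨0, hn0⟩, rfl, rfl, rfl⟩))
  have hxv : l (.inl (⟨n - 1, by omega⟩ : Fin n) : Fin n ⊕ Fin 6) ≤ r (.inr 1) ∧
      l (.inr 1) ≤ r (.inl ⟨n - 1, by omega⟩) :=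
    adj _ _ (by simp) (Or.inr (Or.inr (Or.inl ⟨⟨n - 1, by omega⟩, rfl, by show n - 1 + 1 = n; omega, rfl⟩)))
  have hpath : ∀ k (hk : k + 1 < n),
      l (.inl (⟨k + 1, hk⟩ : Fin n) : Fin n ⊕ Fin 6) ≤ r (.inl ⟨k, by omega⟩) ∧
      l (.inl (⟨k, by omega⟩ : Fin n) : Fin n ⊕ Fin 6) ≤ r (.inl ⟨k + 1, hk⟩) := by
    intro k hk
    have := adj (.inl (⟨k, by omega⟩ : Fin n)) (.inl ⟨k + 1, hk⟩)
      (by intro hcon; simp [Fin.ext_iff] at hcon)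
      (Or.inl ⟨⟨k, by omega⟩, ⟨k + 1, hk⟩, rfl, rfl, rfl⟩)
    exact ⟨this.2, this.1⟩
  -- non-adjacency facts
  have nu'y : r (.inr 2 : Fin n ⊕ Fin 6) < l (.inr 5) ∨ r (.inr 5) < l (.inr 2) :=
    nadj _ _ (by simp) (by simp [hstarRel]) (by simp [hstarRel])
  have nux : ∀ i : Fin n, r (.inl i : Fin n ⊕ Fin 6) < l (.inr 4) ∨
      r (.inr 4) < l (.inl i) := fun i =>
    nadj _ _ (by simp) (by simp [hstarRel]) (by simp [hstarRel])
  have nwz : r (.inr 3 : Fin n ⊕ Fin 6) < l (.inr 0) ∨ r (.inr 0) < l (.inr 3) :=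
    nadj _ _ (by simp) (by simp [hstarRel]) (by simp [hstarRel])
  have nvy : r (.inr 2 : Fin n ⊕ Fin 6) < l (.inr 1) ∨ r (.inr 1) < l (.inr 2) :=
    nadj _ _ (by simp) (by simp [hstarRel]) (by simp [hstarRel])
  -- Step 1: u is bounded
  have hub : l (.inr 4 : Fin n ⊕ Fin 6) ≤ r (.inr 4) := by
    by_contra hc
    push_neg at hc
    rcases nu'y with h' | h'
    · linarith [hu'u.1, huy.1]
    · linarith [hu'u.2, huy.2]
  -- Step 2: all x-intervals lie on the same side of u
  have dir : (∀ i : Fin n, r (.inl i : Fin n ⊕ Fin 6) < l (.inr 4)) ∨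
      (∀ i : Fin n, r (.inr 4 : Fin n ⊕ Fin 6) < l (.inl i)) := by
    rcases nux ⟨0, hn0⟩ with h0 | h0
    · left
      have main : ∀ k, ∀ hk : k < n, r (.inl (⟨k, hk⟩ : Fin n) : Fin n ⊕ Fin 6) < l (.inr 4) := by
        intro k
        induction k with
        | zero => intro hk; exact h0
        | succ m ih =>
          intro hk
          have hm : m < n := by omega
          have ihm := ih hm
          rcases nux ⟨m + 1, hk⟩ with h1 | h1
          · exact h1
          · exact absurd (hpath m hk).1 (by push_neg; linarith)
      exact fun i => main i.1 i.2
    · right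
      have main : ∀ k, ∀ hk : k < n, r (.inr 4 : Fin n ⊕ Fin 6) < l (.inl (⟨k, hk⟩ : Fin n)) := by
        intro k
        induction k with
        | zero => intro hk; exact h0
        | succ m ih =>
          intro hk
          have hm : m < n := by omega
          have ihm := ih hm
          rcases nux ⟨m + 1, hk⟩ with h1 | h1
          · exact absurd (hpath m hk).2 (by push_neg; linarith)
          · exact h1
      exact fun i => main i.1 i.2
  -- Step 3: contradiction in each case
  rcases dir with hd | hd
  · -- u to the right of all x's
    have hA := hd ⟨n - 1, by omega⟩
    have h0 := hd ⟨0, hn0⟩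
    have h1 : r (.inr 1 : Fin n ⊕ Fin 6) < l (.inr 2) := by
      rcases nvy with h' | h'
      · exfalso; linarith [hxv.2, huy.1]
      · exact h'
    have h2 : r (.inr 0 : Fin n ⊕ Fin 6) < l (.inr 3) := by
      rcases nwz with h' | h'
      · exfalso; linarith [hwx.1, huz.1]
      · exact h'
    linarith [hyw.1, hzv.1, h1, h2]
  · -- u to the left of all x's
    have hA := hd ⟨n - 1, by omega⟩
    have h0 := hd ⟨0, hn0⟩
    have h1 : r (.inr 2 : Fin n ⊕ Fin 6) < l (.inr 1) := by
      rcases nvy with h' | h'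
      · exact h'
      · exfalso; linarith [hxv.1, huy.2]
    have h2 : r (.inr 3 : Fin n ⊕ Fin 6) < l (.inr 0) := by
      rcases nwz with h' | h'
      · exact h'
      · exfalso; linarith [hwx.2, huz.2]
    linarith [hyw.2, hzv.2, h1, h2]
end
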